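/- arXiv:1205.4515 — 3 statements merged into one kernel-verified Lean document; each statement's English description precedes it below -/
import Mathlib

section
/- Let f ∈ F_q((X^{-1})) \ F_q(X) with continued fraction expansion (a_n) and approximation exponent ν = ν(f). Then 2 - 2/ν = 1 + limsup_{n→∞} log|a_{n+1}| / log|a_{n+1} ∏_{i=1}^{n} a_i^2|, where |·| is the degree absolute value on F_q((X^{-1})). Equivalently, 2/ν = 1 - limsup_{n→∞} deg a_{n+1} / (deg a_{n+1} + 2∑_{i=1}^n deg a_i). -/
noncomputable section
open scoped Classical

open Polynomial

variable {Fq : Type} [Field Fq] [Fintype Fq]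

/-- The variable t = X⁻¹ of the Laurent series field F_q((X⁻¹)) = `LaurentSeries Fq`. -/
def tvar (Fq : Type) [Field Fq] : LaurentSeries Fq := HahnSeries.single (1 : ℤ) (1 : Fq)

/-- Embedding of polynomials in X into F_q((X⁻¹)), sending X to t⁻¹. -/
def emb (p : Polynomial Fq) : LaurentSeries Fq :=
  Polynomial.eval₂ HahnSeries.C (tvar Fq)⁻¹ p

/-- The absolute value |f| = q^{-order(f)}. -/
def absK (f : LaurentSeries Fq) : ℝ :=
  if f = 0 then 0 else (Fintype.card Fq : ℝ) ^ (-(HahnSeries.order f))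

/-- f is irrational, i.e. f ∈ K̂ \ K. -/
def IrrationalLS (f : LaurentSeries Fq) : Prop :=
  ∀ P Q : Polynomial Fq, Q ≠ 0 → f ≠ emb P / emb Q

/-- The integral part [f] ∈ F_q[X] of a Laurent series f = ∑ f_i X^{-i}:
the polynomial ∑_{i ≤ 0} f_i X^{-i}. -/
def intPart (f : LaurentSeries Fq) : Polynomial Fq :=
  ∑ j ∈ Finset.range (Int.toNat (1 - f.order)),
    Polynomial.C (f.coeff (-(j : ℤ))) * Polynomial.X ^ j

/-- `ContFrac f h a` : `a` is the continued fraction expansion of `f`, with `h` the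
sequence of complete quotients, obtained by iterating Artin's map. -/
def ContFrac (f : LaurentSeries Fq) (h : ℕ → LaurentSeries Fq)
    (a : ℕ → Polynomial Fq) : Prop :=
  h 0 = f ∧ (∀ n, a n = intPart (h n)) ∧ ∀ n, h (n + 1) = (h n - emb (a n))⁻¹

/-- `ConvRec a P Q` : `P (n+1)/Q (n+1)` are the convergents `P_n/Q_n` of the continued
fraction with partial quotients `a`; indices are shifted by one so that `P 0 = P_{-1}`. -/
def ConvRec (a P Q : ℕ → Polynomial Fq) : Prop :=
  P 0 = 1 ∧ Q 0 = 0 ∧ P 1 = a 0 ∧ Q 1 = 1 ∧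
  (∀ n, P (n + 2) = a (n + 1) * P (n + 1) + P n) ∧
  (∀ n, Q (n + 2) = a (n + 1) * Q (n + 1) + Q n)

open scoped ENNReal

/-- The set of exponents ν' > 0 such that |f - P/Q| ≤ |Q|^{-ν'} has infinitely many
coprime solutions P/Q ∈ F_q(X). -/
def nuSet (f : LaurentSeries Fq) : Set ℝ :=
  {ν' : ℝ | 0 < ν' ∧
    {r : LaurentSeries Fq | ∃ P Q : Polynomial Fq, Q ≠ 0 ∧ IsCoprime P Q ∧
      r = emb P / emb Q ∧ absK (f - r) ≤ (absK (emb Q)) ^ (-ν')}.Infinite}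

/-- The approximation exponent ν(f) ∈ [0,∞]. -/
def nu (f : LaurentSeries Fq) : ℝ≥0∞ := sSup (ENNReal.ofReal '' nuSet f)

set_option linter.unusedSectionVars false

namespace CFAux
open HahnSeries

lemma tvar_inv : (tvar Fq)⁻¹ = HahnSeries.single (-1 : ℤ) (1 : Fq) := by
  rw [tvar, HahnSeries.inv_single, inv_one]

lemma emb_apply (P : Polynomial Fq) :
    emb P = ∑ i ∈ P.support, HahnSeries.single (-(i : ℤ)) (P.coeff i) := by
  rw [emb, Polynomial.eval₂_eq_sum, Polynomial.sum, tvar_inv]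
  refine Finset.sum_congr rfl fun i _ => ?_
  rw [single_pow, C_apply, single_mul_single, zero_add]
  norm_num

lemma emb_coeff (P : Polynomial Fq) (j : ℕ) :
    (emb P).coeff (-(j : ℤ)) = P.coeff j := by
  classical
  rw [emb_apply, ← coeff.addMonoidHom_apply, map_sum]
  simp only [coeff.addMonoidHom_apply, HahnSeries.coeff_single]
  rw [Finset.sum_eq_single j]
  · simp
  · intro b _ hb
    rw [if_neg]
    intro h
    exact hb (by omega)
  · intro h
    simp [Polynomial.notMem_support_iff.mp h]

lemma emb_coeff_pos (P : Polynomial Fq) (k : ℤ) (hk : 0 < k) :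
    (emb P).coeff k = 0 := by
  classical
  rw [emb_apply, ← coeff.addMonoidHom_apply, map_sum]
  simp only [coeff.addMonoidHom_apply, HahnSeries.coeff_single]
  refine Finset.sum_eq_zero fun i _ => ?_
  rw [if_neg]
  omega

lemma emb_coeff' (P : Polynomial Fq) (k : ℤ) (hk : k ≤ 0) :
    (emb P).coeff k = P.coeff (-k).toNat := by
  have : k = -(((-k).toNat : ℕ) : ℤ) := by omega
  rw [this, emb_coeff]
  congr 1
  omega

def embHom : Polynomial Fq →+* LaurentSeries Fq :=
  Polynomial.eval₂RingHom HahnSeries.C (tvar Fq)⁻¹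

lemma emb_def (P : Polynomial Fq) : emb P = embHom P := rfl

@[simp] lemma emb_zero : emb (0 : Polynomial Fq) = 0 := by simp [emb_def]
@[simp] lemma emb_one : emb (1 : Polynomial Fq) = 1 := by simp [emb_def]
lemma emb_add (P Q : Polynomial Fq) : emb (P + Q) = emb P + emb Q := by simp [emb_def]
lemma emb_sub (P Q : Polynomial Fq) : emb (P - Q) = emb P - emb Q := by simp [emb_def]
lemma emb_mul (P Q : Polynomial Fq) : emb (P * Q) = emb P * emb Q := by simp [emb_def]

lemma order_eq_of {g : LaurentSeries Fq} {a : ℤ} (h1 : g.coeff a ≠ 0)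
    (h2 : ∀ b < a, g.coeff b = 0) : g.order = a := by
  have hg : g ≠ 0 := ne_zero_of_coeff_ne_zero h1
  refine le_antisymm (order_le_of_coeff_ne_zero h1) ?_
  by_contra hlt
  exact (coeff_order_eq_zero.not.mpr hg) (h2 _ (not_le.mp hlt))

lemma le_order_of {g : LaurentSeries Fq} {a : ℤ} (hg : g ≠ 0)
    (h2 : ∀ b < a, g.coeff b = 0) : a ≤ g.order := by
  by_contra hlt
  exact (coeff_order_eq_zero.not.mpr hg) (h2 _ (not_le.mp hlt))

lemma emb_ne_zero {P : Polynomial Fq} (hP : P ≠ 0) : emb P ≠ 0 := by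
  intro h
  apply Polynomial.leadingCoeff_ne_zero.mpr hP
  have := emb_coeff P P.natDegree
  rw [h, HahnSeries.coeff_zero] at this
  rw [Polynomial.leadingCoeff]
  exact this.symm

lemma emb_injective : Function.Injective (emb (Fq := Fq)) := by
  intro P Q h
  ext j
  rw [← emb_coeff P j, ← emb_coeff Q j, h]

lemma order_emb {P : Polynomial Fq} (hP : P ≠ 0) :
    (emb P).order = -(P.natDegree : ℤ) := by
  refine order_eq_of ?_ ?_
  · rw [emb_coeff]
    exact Polynomial.leadingCoeff_ne_zero.mpr hP
  · intro b hb
    have hb0 : b ≤ 0 := by omega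
    rw [emb_coeff' P b hb0]
    apply Polynomial.coeff_eq_zero_of_natDegree_lt
    omega

lemma intPart_coeff (g : LaurentSeries Fq) (j : ℕ) :
    (intPart g).coeff j = if (j : ℤ) < 1 - g.order then g.coeff (-(j : ℤ)) else 0 := by
  have hsmall : ∀ m : ℕ, ¬((m : ℤ) < 1 - g.order) → g.coeff (-(m : ℤ)) = 0 := by
    intro m h
    exact coeff_eq_zero_of_lt_order (by omega)
  rw [intPart, Polynomial.finset_sum_coeff]
  simp only [Polynomial.coeff_C_mul, Polynomial.coeff_X_pow]
  rw [Finset.sum_eq_single j]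
  · by_cases h : (j : ℤ) < 1 - g.order
    · rw [if_pos h, if_pos rfl, mul_one]
    · rw [if_neg h, if_pos rfl, mul_one]
      exact hsmall j h
  · intro b _ hb
    rw [if_neg (fun hc => hb hc.symm), mul_zero]
  · intro hj
    rw [Finset.mem_range, not_lt] at hj
    rw [if_pos rfl, mul_one]
    exact hsmall j (by omega)

lemma sub_intPart_coeff (g : LaurentSeries Fq) (k : ℤ) (hk : k ≤ 0) :
    (g - emb (intPart g)).coeff k = 0 := by
  rw [HahnSeries.coeff_sub, emb_coeff' _ k hk]
  set j := (-k).toNat with hj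
  have hkj : k = -(j : ℤ) := by omega
  rw [intPart_coeff]
  by_cases h : (j : ℤ) < 1 - g.order
  · rw [if_pos h, ← hkj, sub_self]
  · rw [if_neg h]
    rw [hkj]
    rw [coeff_eq_zero_of_lt_order (by omega), sub_zero]

lemma intPart_natDegree {g : LaurentSeries Fq} (hg : g ≠ 0) (ho : g.order ≤ 0) :
    intPart g ≠ 0 ∧ (intPart g).natDegree = (-g.order).toNat := by
  set j0 := (-g.order).toNat with hj0
  have hc : (intPart g).coeff j0 ≠ 0 := by
    rw [intPart_coeff, if_pos (by omega)]
    have : -(j0 : ℤ) = g.order := by omega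
    rw [this]
    exact coeff_order_eq_zero.not.mpr hg
  have hne : intPart g ≠ 0 := fun h => hc (by simp [h])
  refine ⟨hne, le_antisymm ?_ (Polynomial.le_natDegree_of_ne_zero hc)⟩
  rw [Polynomial.natDegree_le_iff_coeff_eq_zero]
  intro m hm
  rw [intPart_coeff, if_neg (by omega)]


end CFAux
section Part3
open HahnSeries

namespace CFAux

def IsRat (g : LaurentSeries Fq) : Prop :=
  ∃ P Q : Polynomial Fq, Q ≠ 0 ∧ g = emb P / emb Q

lemma irrationalLS_iff {f : LaurentSeries Fq} : IrrationalLS f ↔ ¬ IsRat f := by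
  constructor
  · rintro hf ⟨P, Q, hQ, rfl⟩
    exact hf P Q hQ rfl
  · rintro hf P Q hQ rfl
    exact hf ⟨P, Q, hQ, rfl⟩

lemma isRat_emb (P : Polynomial Fq) : IsRat (emb P) :=
  ⟨P, 1, one_ne_zero, by simp⟩

lemma isRat_zero : IsRat (0 : LaurentSeries Fq) := by
  simpa using isRat_emb (0 : Polynomial Fq)

lemma IsRat.inv {g : LaurentSeries Fq} (hg : IsRat g) : IsRat g⁻¹ := by
  obtain ⟨P, Q, hQ, rfl⟩ := hg
  by_cases hP : emb P = 0
  · simpa [hP] using isRat_zero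
  · exact ⟨Q, P, fun h => hP (by rw [h]; exact emb_zero), by rw [inv_div]⟩

lemma IsRat.add_emb {g : LaurentSeries Fq} (hg : IsRat g) (A : Polynomial Fq) :
    IsRat (g + emb A) := by
  obtain ⟨P, Q, hQ, rfl⟩ := hg
  refine ⟨P + A * Q, Q, hQ, ?_⟩
  rw [emb_add, emb_mul, add_div, mul_div_cancel_right₀ _ (emb_ne_zero hQ)]

variable {f : LaurentSeries Fq} {h : ℕ → LaurentSeries Fq} {a : ℕ → Polynomial Fq}

lemma h_irrational (hcf : ContFrac f h a) (hf : IrrationalLS f) :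
    ∀ n, ¬ IsRat (h n) := by
  intro n
  induction n with
  | zero => rw [hcf.1]; exact irrationalLS_iff.mp hf
  | succ n ih =>
    intro hrat
    have hu : h n - emb (a n) ≠ 0 := by
      intro h0
      exact ih (by rw [sub_eq_zero] at h0; rw [h0]; exact isRat_emb _)
    rw [hcf.2.2 n] at hrat
    have := (hrat.inv).add_emb (a n)
    rw [inv_inv, sub_add_cancel] at this
    exact ih this

lemma h_ne_zero (hcf : ContFrac f h a) (hf : IrrationalLS f) (n : ℕ) : h n ≠ 0 :=
  fun h0 => h_irrational hcf hf n (h0 ▸ isRat_zero)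

lemma h_sub_ne_zero (hcf : ContFrac f h a) (hf : IrrationalLS f) (n : ℕ) :
    h n - emb (a n) ≠ 0 := by
  intro h0
  rw [sub_eq_zero] at h0
  exact h_irrational hcf hf n (h0 ▸ isRat_emb _)

lemma order_inv {g : LaurentSeries Fq} (hg : g ≠ 0) : (g⁻¹).order = -g.order := by
  have := order_mul hg (inv_ne_zero hg)
  rw [mul_inv_cancel₀ hg, order_one] at this
  omega

lemma order_h_sub (hcf : ContFrac f h a) (hf : IrrationalLS f) (n : ℕ) :
    1 ≤ (h n - emb (a n)).order := by
  refine le_order_of (h_sub_ne_zero hcf hf n) ?_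
  intro b hb
  rw [hcf.2.1 n]
  exact sub_intPart_coeff (h n) b (by omega)

lemma order_h_succ (hcf : ContFrac f h a) (hf : IrrationalLS f) (n : ℕ) :
    (h (n + 1)).order ≤ -1 := by
  rw [hcf.2.2 n, order_inv (h_sub_ne_zero hcf hf n)]
  have := order_h_sub hcf hf n
  omega

lemma deg_a (hcf : ContFrac f h a) (hf : IrrationalLS f) (n : ℕ) :
    a (n + 1) ≠ 0 ∧ ((a (n + 1)).natDegree : ℤ) = -(h (n + 1)).order := by
  have h1 := order_h_succ hcf hf n
  have h2 := intPart_natDegree (h_ne_zero hcf hf (n + 1)) (by omega)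
  rw [← hcf.2.1 (n + 1)] at h2
  exact ⟨h2.1, by rw [h2.2]; omega⟩

lemma order_h_eq (hcf : ContFrac f h a) (hf : IrrationalLS f) (n : ℕ) :
    (h (n + 1)).order = -((a (n + 1)).natDegree : ℤ) := by
  have := (deg_a hcf hf n).2
  omega

end CFAux
end Part3
section Part4
open HahnSeries

namespace CFAux

variable (a : ℕ → Polynomial Fq)

/-- pair (P n, P (n+1)) of numerators of convergents -/
def prP : ℕ → Polynomial Fq × Polynomial Fq
  | 0 => (1, a 0)
  | n + 1 => ((prP n).2, a (n + 1) * (prP n).2 + (prP n).1)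

def prQ : ℕ → Polynomial Fq × Polynomial Fq
  | 0 => (0, 1)
  | n + 1 => ((prQ n).2, a (n + 1) * (prQ n).2 + (prQ n).1)

def cp (n : ℕ) : Polynomial Fq := (prP a n).1
def cq (n : ℕ) : Polynomial Fq := (prQ a n).1

@[simp] lemma cp_zero : cp a 0 = 1 := rfl
@[simp] lemma cq_zero : cq a 0 = 0 := rfl
@[simp] lemma cp_one : cp a 1 = a 0 := rfl
@[simp] lemma cq_one : cq a 1 = 1 := rfl

lemma cp_rec (n : ℕ) : cp a (n + 2) = a (n + 1) * cp a (n + 1) + cp a n := rfl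
lemma cq_rec (n : ℕ) : cq a (n + 2) = a (n + 1) * cq a (n + 1) + cq a n := rfl

lemma det (n : ℕ) :
    cp a (n + 1) * cq a n - cp a n * cq a (n + 1) = (-1 : Polynomial Fq) ^ (n + 1) := by
  induction n with
  | zero => simp
  | succ n ih =>
    rw [cp_rec, cq_rec, pow_succ]
    ring_nf
    ring_nf at ih
    linear_combination (-1 : Polynomial Fq) * ih

lemma coprime_conv (n : ℕ) : IsCoprime (cp a (n + 1)) (cq a (n + 1)) := by
  refine ⟨(-1 : Polynomial Fq) ^ (n + 1) * cq a n, -((-1 : Polynomial Fq) ^ (n + 1) * cp a n), ?_⟩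
  have hdet := det a n
  have key : ((-1 : Polynomial Fq) ^ (n + 1)) *
      (cp a (n + 1) * cq a n - cp a n * cq a (n + 1)) = 1 := by
    rw [hdet, ← _root_.pow_add]
    have h2 : (n + 1) + (n + 1) = 2 * (n + 1) := by ring
    rw [h2, pow_mul]
    simp
  linear_combination key

/-- partial sums of degrees -/
def S (n : ℕ) : ℕ := ∑ i ∈ Finset.Icc 1 n, (a i).natDegree

@[simp] lemma S_zero : S a 0 = 0 := rfl

lemma S_succ (n : ℕ) : S a (n + 1) = S a n + (a (n + 1)).natDegree := by
  rw [S, S, ← Finset.sum_Icc_succ_top (by omega)]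

lemma S_mono : Monotone (S a) := by
  intro m n hmn
  exact Finset.sum_le_sum_of_subset (Finset.Icc_subset_Icc_right hmn)

variable {a}

lemma S_lt_succ (hd : ∀ i : ℕ, 1 ≤ i → 0 < (a i).natDegree) (n : ℕ) :
    S a n < S a (n + 1) := by
  have := hd (n + 1) (by omega)
  rw [S_succ]
  omega

lemma le_S (hd : ∀ i : ℕ, 1 ≤ i → 0 < (a i).natDegree) (n : ℕ) : n ≤ S a n := by
  induction n with
  | zero => simp
  | succ n ih => have := S_lt_succ hd n; omega

lemma cq_deg' (hd : ∀ i : ℕ, 1 ≤ i → 0 < (a i).natDegree) (n : ℕ) :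
    (cq a (n + 1) ≠ 0 ∧ (cq a (n + 1)).natDegree = S a n) ∧
      (cq a n).degree < (cq a (n + 1)).degree := by
  induction n with
  | zero =>
    refine ⟨⟨one_ne_zero, by simp⟩, ?_⟩
    simp
  | succ n ih =>
    obtain ⟨⟨hne, hdeg⟩, hlt⟩ := ih
    have ha : a (n + 1) ≠ 0 := by
      have := hd (n + 1) (by omega)
      intro h0
      rw [h0] at this
      simp at this
    have hdm : (a (n + 1) * cq a (n + 1)).natDegree = (a (n + 1)).natDegree + S a n := by
      rw [Polynomial.natDegree_mul ha hne, hdeg]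
    have hnem : a (n + 1) * cq a (n + 1) ≠ 0 := mul_ne_zero ha hne
    have hltnew : (cq a (n + 1)).degree < (a (n + 1) * cq a (n + 1)).degree := by
      rw [Polynomial.degree_eq_natDegree hne, Polynomial.degree_eq_natDegree hnem, hdm, hdeg]
      exact_mod_cast by have := hd (n + 1) (by omega); omega
    have hdeg2 : (cq a (n + 2)).degree = (a (n + 1) * cq a (n + 1)).degree := by
      rw [cq_rec]
      exact Polynomial.degree_add_eq_left_of_degree_lt (lt_trans hlt hltnew)
    have hne2 : cq a (n + 2) ≠ 0 := by
      intro h0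
      rw [h0, Polynomial.degree_zero, eq_comm, Polynomial.degree_eq_bot] at hdeg2
      exact hnem hdeg2
    refine ⟨⟨hne2, ?_⟩, by rw [hdeg2]; exact hltnew⟩
    have := Polynomial.natDegree_eq_of_degree_eq hdeg2
    rw [this, hdm, S_succ]
    omega

lemma cq_ne (hd : ∀ i : ℕ, 1 ≤ i → 0 < (a i).natDegree) (n : ℕ) : cq a (n + 1) ≠ 0 :=
  ((cq_deg' hd n).1).1

lemma cq_deg (hd : ∀ i : ℕ, 1 ≤ i → 0 < (a i).natDegree) (n : ℕ) :
    (cq a (n + 1)).natDegree = S a n :=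
  ((cq_deg' hd n).1).2

end CFAux
end Part4
section Part5
open HahnSeries

namespace CFAux

variable {f : LaurentSeries Fq} {h : ℕ → LaurentSeries Fq} {a : ℕ → Polynomial Fq}

def eSeq (f : LaurentSeries Fq) (a : ℕ → Polynomial Fq) (n : ℕ) : LaurentSeries Fq :=
  f * emb (cq a n) - emb (cp a n)

lemma eSeq_zero : eSeq f a 0 = -1 := by simp [eSeq]

lemma eSeq_rec (hcf : ContFrac f h a) (hf : IrrationalLS f) (n : ℕ) :
    h (n + 1) * eSeq f a (n + 1) = - eSeq f a n := by
  induction n with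
  | zero =>
    have h1 : h 1 = (f - emb (a 0))⁻¹ := by rw [hcf.2.2 0, hcf.1]
    have hne : f - emb (a 0) ≠ 0 := by rw [← hcf.1]; exact h_sub_ne_zero hcf hf 0
    rw [eSeq_zero, eSeq, h1, cq_one, cp_one, emb_one, mul_one, inv_mul_cancel₀ hne, neg_neg]
  | succ n ih =>
    have hrec : eSeq f a (n + 2) = (emb (a (n + 1)) - h (n + 1)) * eSeq f a (n + 1) := by
      have hen : eSeq f a n = - (h (n + 1) * eSeq f a (n + 1)) := by rw [ih, neg_neg]
      rw [eSeq, cq_rec, cp_rec, emb_add, emb_add, emb_mul, emb_mul]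
      calc f * (emb (a (n+1)) * emb (cq a (n+1)) + emb (cq a n))
            - (emb (a (n+1)) * emb (cp a (n+1)) + emb (cp a n))
          = emb (a (n+1)) * eSeq f a (n+1) + eSeq f a n := by simp only [eSeq]; ring
        _ = (emb (a (n + 1)) - h (n + 1)) * eSeq f a (n + 1) := by rw [hen]; ring
    have hs : h (n + 1) - emb (a (n + 1)) ≠ 0 := h_sub_ne_zero hcf hf (n + 1)
    rw [hrec, hcf.2.2 (n + 1)]
    rw [show (emb (a (n+1)) - h (n+1)) = -(h (n+1) - emb (a (n+1))) by ring]
    rw [show (h (n+1) - emb (a (n+1)))⁻¹ * (-(h (n+1) - emb (a (n+1))) * eSeq f a (n+1))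
        = -((h (n+1) - emb (a (n+1)))⁻¹ * (h (n+1) - emb (a (n+1))) * eSeq f a (n+1)) by ring]
    rw [inv_mul_cancel₀ hs, one_mul]

lemma eSeq_order (hcf : ContFrac f h a) (hf : IrrationalLS f) (n : ℕ) :
    eSeq f a n ≠ 0 ∧ (eSeq f a n).order = (S a n : ℤ) := by
  induction n with
  | zero =>
    rw [eSeq_zero]
    refine ⟨neg_ne_zero.mpr one_ne_zero, ?_⟩
    rw [order_neg, order_one]
    simp
  | succ n ih =>
    have hrec := eSeq_rec hcf hf n
    have hne : eSeq f a (n + 1) ≠ 0 := by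
      intro h0
      rw [h0, mul_zero, eq_comm, neg_eq_zero] at hrec
      exact ih.1 hrec
    refine ⟨hne, ?_⟩
    have horder := order_mul (h_ne_zero hcf hf (n + 1)) hne
    rw [hrec, order_neg, ih.2, order_h_eq hcf hf n] at horder
    have hS := S_succ a n
    omega

lemma order_div {u v : LaurentSeries Fq} (hu : u ≠ 0) (hv : v ≠ 0) :
    (u / v).order = u.order - v.order := by
  rw [div_eq_mul_inv, order_mul hu (inv_ne_zero hv), order_inv hv]
  ring

lemma conv_dist (hcf : ContFrac f h a) (hf : IrrationalLS f)
    (hd : ∀ i : ℕ, 1 ≤ i → 0 < (a i).natDegree) (n : ℕ) :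
    f - emb (cp a (n + 1)) / emb (cq a (n + 1))
      = eSeq f a (n + 1) / emb (cq a (n + 1)) := by
  have hq := emb_ne_zero (cq_ne hd n)
  field_simp [eSeq]
  rfl

lemma conv_dist_order (hcf : ContFrac f h a) (hf : IrrationalLS f)
    (hd : ∀ i : ℕ, 1 ≤ i → 0 < (a i).natDegree) (n : ℕ) :
    f - emb (cp a (n + 1)) / emb (cq a (n + 1)) ≠ 0 ∧
    (f - emb (cp a (n + 1)) / emb (cq a (n + 1))).order
      = (S a (n + 1) : ℤ) + (S a n : ℤ) := by
  rw [conv_dist hcf hf hd n]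
  have he := eSeq_order hcf hf (n + 1)
  have hq := emb_ne_zero (cq_ne hd n)
  refine ⟨div_ne_zero he.1 hq, ?_⟩
  rw [order_div he.1 hq, he.2, order_emb (cq_ne hd n), cq_deg hd n]
  ring

/-! absolute value interface -/

lemma one_lt_q : (1 : ℝ) < (Fintype.card Fq : ℝ) := by
  exact_mod_cast Fintype.one_lt_card

lemma absK_rpow (g : LaurentSeries Fq) (hg : g ≠ 0) :
    absK g = (Fintype.card Fq : ℝ) ^ ((-(g.order) : ℤ) : ℝ) := by
  rw [absK, if_neg hg, Real.rpow_intCast]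

lemma cond_iff {g : LaurentSeries Fq} (hg : g ≠ 0) {Q : Polynomial Fq} (hQ : Q ≠ 0)
    (ν' : ℝ) :
    absK g ≤ (absK (emb Q)) ^ (-ν') ↔ ν' * (Q.natDegree : ℝ) ≤ ((g.order : ℤ) : ℝ) := by
  have hq0 : (0 : ℝ) < (Fintype.card Fq : ℝ) := lt_trans one_pos one_lt_q
  rw [absK_rpow g hg, absK_rpow (emb Q) (emb_ne_zero hQ), order_emb hQ, neg_neg,
    ← Real.rpow_mul (le_of_lt hq0), Real.rpow_le_rpow_left_iff one_lt_q]
  push_cast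
  constructor <;> intro h <;> linarith

end CFAux
end Part5
section Part6
open HahnSeries

namespace CFAux

variable {f : LaurentSeries Fq} {h : ℕ → LaurentSeries Fq} {a : ℕ → Polynomial Fq}

lemma sub_rat_ne (hf : IrrationalLS f) {r : LaurentSeries Fq} (hr : IsRat r) :
    f - r ≠ 0 := by
  intro h0
  rw [sub_eq_zero] at h0
  exact (irrationalLS_iff.mp hf) (h0 ▸ hr)

lemma best_approx (hcf : ContFrac f h a) (hf : IrrationalLS f)
    (hd : ∀ i : ℕ, 1 ≤ i → 0 < (a i).natDegree) {ν' : ℝ} (hν : 2 < ν')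
    {P Q : Polynomial Fq} (hQ : Q ≠ 0) (hcop : IsCoprime P Q)
    (hr : absK (f - emb P / emb Q) ≤ absK (emb Q) ^ (-ν'))
    (hQdeg : 1 ≤ Q.natDegree) :
    ∃ n, 1 ≤ n ∧ emb P / emb Q = emb (cp a (n + 1)) / emb (cq a (n + 1)) ∧
      ν' * (S a n : ℝ) ≤ (S a n : ℝ) + (S a (n + 1) : ℝ) := by
  set r := emb P / emb Q with hrdef
  have hfr : f - r ≠ 0 := sub_rat_ne hf ⟨P, Q, hQ, rfl⟩
  set D := Q.natDegree with hD
  have ho : ν' * (D : ℝ) ≤ (((f - r).order : ℤ) : ℝ) := (cond_iff hfr hQ ν').mp hr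
  have hoZ : 2 * (D : ℤ) + 1 ≤ (f - r).order := by
    have h1 : (2 : ℝ) * (D : ℝ) < ν' * (D : ℝ) := by
      have : (1 : ℝ) ≤ (D : ℝ) := by exact_mod_cast hQdeg
      nlinarith
    have h2 : ((2 * (D : ℤ) : ℤ) : ℝ) < (((f - r).order : ℤ) : ℝ) := by push_cast; linarith
    have h3 : 2 * (D : ℤ) < (f - r).order := by exact_mod_cast h2
    omega
  -- choose n with S n ≤ D < S (n+1)
  have hex : ∃ n, (D : ℕ) < S a (n + 1) := ⟨D, by have := le_S hd (D + 1); have := S_succ a D; omega⟩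
  classical
  have hgood : ∃ n, S a n ≤ D ∧ D < S a (n + 1) := by
    refine ⟨Nat.find hex, ?_, Nat.find_spec hex⟩
    rcases Nat.eq_zero_or_pos (Nat.find hex) with h0 | h0
    · rw [h0]; simp
    · have hm := Nat.find_min hex (m := Nat.find hex - 1) (by omega)
      have heq : Nat.find hex - 1 + 1 = Nat.find hex := by omega
      rw [heq] at hm
      omega
  obtain ⟨n, hn1, hn2⟩ := hgood
  -- determinant argument
  set c := emb (cp a (n + 1)) / emb (cq a (n + 1)) with hc
  have hcqne : emb (cq a (n + 1)) ≠ 0 := emb_ne_zero (cq_ne hd n)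
  have hQne : emb Q ≠ 0 := emb_ne_zero hQ
  have hcdist := conv_dist_order hcf hf hd n
  have hrc : r = c := by
    by_contra hne
    set W : Polynomial Fq := P * cq a (n + 1) - cp a (n + 1) * Q with hW
    have hWne : W ≠ 0 := by
      intro h0
      apply hne
      rw [hW, sub_eq_zero] at h0
      rw [hrdef, hc, div_eq_div_iff hQne hcqne, ← emb_mul, ← emb_mul, h0]
    have hwrc : emb W = emb Q * emb (cq a (n + 1)) * ((r - f) + (f - c)) := by
      rw [hW, emb_sub, emb_mul, emb_mul]
      rw [hrdef, hc]
      field_simp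
      ring
    have hrcne : (r - f) + (f - c) ≠ 0 := by
      intro h0
      apply hne
      have : r - c = 0 := by rw [← h0]; ring
      rw [sub_eq_zero] at this
      exact this
    have hrfne : r - f ≠ 0 := by
      intro h0
      apply hfr
      rw [← neg_eq_zero, neg_sub] at h0
      exact h0
    have hmin : min ((r - f).order) ((f - c).order) ≤ ((r - f) + (f - c)).order :=
      min_order_le_order_add hrcne
    have horf : (r - f).order = (f - r).order := by
      rw [show r - f = -(f - r) by ring, order_neg]
    have hordw : (emb W).order = -(D : ℤ) - (S a n : ℤ) + ((r - f) + (f - c)).order := by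
      rw [hwrc, order_mul (mul_ne_zero hQne hcqne) hrcne, order_mul hQne hcqne,
        order_emb hQ, order_emb (cq_ne hd n), cq_deg hd n]
      ring
    have hwle : (emb W).order ≤ 0 := by
      rw [order_emb hWne]
      omega
    have hcord := hcdist.2
    rw [horf, hcord] at hmin
    have hSn : (S a n : ℤ) ≤ (D : ℤ) := by exact_mod_cast hn1
    have hSn2 : (D : ℤ) < (S a (n + 1) : ℤ) := by exact_mod_cast hn2
    rcases min_le_iff.mp hmin with hcase | hcase <;> omega
  -- from r = c : Q and cq (n+1) are associates
  have hPQ : P * cq a (n + 1) = cp a (n + 1) * Q := by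
    apply emb_injective
    rw [emb_mul, emb_mul]
    rw [hrdef, hc, div_eq_div_iff hQne hcqne] at hrc
    exact hrc
  have hdvd1 : Q ∣ cq a (n + 1) := by
    refine (hcop.symm).dvd_of_dvd_mul_left ?_
    exact ⟨cp a (n + 1), by linear_combination hPQ⟩
  have hdvd2 : cq a (n + 1) ∣ Q := by
    refine ((coprime_conv a n).symm).dvd_of_dvd_mul_left ?_
    exact ⟨P, by linear_combination -hPQ⟩
  have hdegeq : D = S a n := by
    have h1 := Polynomial.natDegree_le_of_dvd hdvd1 (cq_ne hd n)
    have h2 := Polynomial.natDegree_le_of_dvd hdvd2 hQ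
    rw [cq_deg hd n] at h1
    omega
  have hn1' : 1 ≤ n := by
    by_contra h0
    have : n = 0 := by omega
    rw [this] at hdegeq
    simp at hdegeq
    omega
  refine ⟨n, hn1', hrc, ?_⟩
  have hordfr : (f - r).order = (S a (n + 1) : ℤ) + (S a n : ℤ) := by
    rw [hrc]
    exact hcdist.2
  rw [hordfr, hdegeq] at ho
  push_cast at ho ⊢
  linarith

end CFAux
end Part6
section Part7
open HahnSeries

open scoped ENNReal

namespace CFAux

variable {f : LaurentSeries Fq} {h : ℕ → LaurentSeries Fq} {a : ℕ → Polynomial Fq}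

lemma conv_inj (hcf : ContFrac f h a) (hf : IrrationalLS f)
    (hd : ∀ i : ℕ, 1 ≤ i → 0 < (a i).natDegree) :
    Function.Injective (fun n : ℕ => emb (cp a (n + 1)) / emb (cq a (n + 1))) := by
  have key : ∀ {m n : ℕ}, m < n → (S a (m + 1) + S a m) < (S a (n + 1) + S a n) := by
    intro m n hmn
    have h1 := S_mono a (show m + 1 ≤ n from hmn)
    have h2 := S_lt_succ hd n
    have h3 := S_lt_succ hd m
    omega
  intro m n hmn
  simp only at hmn
  have hm := (conv_dist_order hcf hf hd m).2
  have hn := (conv_dist_order hcf hf hd n).2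
  rw [hmn] at hm
  rw [hn] at hm
  rcases lt_trichotomy m n with hc | hc | hc
  · have := key hc; omega
  · exact hc
  · have := key hc; omega

lemma mem_nuSet (hcf : ContFrac f h a) (hf : IrrationalLS f)
    (hd : ∀ i : ℕ, 1 ≤ i → 0 < (a i).natDegree) {ν' : ℝ} (hν : 0 < ν')
    (hinf : {n : ℕ | ν' * (S a n : ℝ) ≤ (S a n : ℝ) + (S a (n + 1) : ℝ)}.Infinite) :
    ν' ∈ nuSet f := by
  refine ⟨hν, ?_⟩
  have hsub : (fun n : ℕ => emb (cp a (n + 1)) / emb (cq a (n + 1))) ''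
      {n : ℕ | ν' * (S a n : ℝ) ≤ (S a n : ℝ) + (S a (n + 1) : ℝ)} ⊆
      {r : LaurentSeries Fq | ∃ P Q : Polynomial Fq, Q ≠ 0 ∧ IsCoprime P Q ∧
        r = emb P / emb Q ∧ absK (f - r) ≤ (absK (emb Q)) ^ (-ν')} := by
    rintro r ⟨n, hn, rfl⟩
    refine ⟨cp a (n + 1), cq a (n + 1), cq_ne hd n, coprime_conv a n, rfl, ?_⟩
    have hco := conv_dist_order hcf hf hd n
    rw [cond_iff hco.1 (cq_ne hd n) ν', hco.2, cq_deg hd n]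
    push_cast
    have := hn
    simp only [Set.mem_setOf_eq] at this
    linarith
  exact Set.Infinite.mono hsub (hinf.image ((conv_inj hcf hf hd).injOn))

lemma nuSet_infinite_indices (hcf : ContFrac f h a) (hf : IrrationalLS f)
    (hd : ∀ i : ℕ, 1 ≤ i → 0 < (a i).natDegree) {ν' : ℝ} (hν : 2 < ν')
    (hmem : ν' ∈ nuSet f) :
    {n : ℕ | 1 ≤ n ∧ ν' * (S a n : ℝ) ≤ (S a n : ℝ) + (S a (n + 1) : ℝ)}.Infinite := by
  obtain ⟨hν0, hinf⟩ := hmem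
  classical
  set E : Set (LaurentSeries Fq) :=
    (fun c : Fq => emb (intPart f + Polynomial.C c)) '' Set.univ with hE
  have hEfin : E.Finite := Set.finite_univ.image _
  have hT := hinf.diff hEfin
  -- every element of the difference comes from a convergent with the inequality
  have hstep : ∀ r ∈ ({r : LaurentSeries Fq | ∃ P Q : Polynomial Fq, Q ≠ 0 ∧ IsCoprime P Q ∧
      r = emb P / emb Q ∧ absK (f - r) ≤ (absK (emb Q)) ^ (-ν')} \ E),
      ∃ n, (1 ≤ n ∧ ν' * (S a n : ℝ) ≤ (S a n : ℝ) + (S a (n + 1) : ℝ)) ∧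
        r = emb (cp a (n + 1)) / emb (cq a (n + 1)) := by
    rintro r ⟨⟨P, Q, hQ, hcop, rfl, habs⟩, hrE⟩
    rcases Nat.eq_zero_or_pos Q.natDegree with hQ0 | hQ1
    · -- constant denominator: r is in E, contradiction
      exfalso
      obtain ⟨u, hu⟩ := Polynomial.natDegree_eq_zero.mp hQ0
      have hune : u ≠ 0 := by
        intro h0
        rw [h0, map_zero] at hu
        exact hQ hu.symm
      have hPQ : emb P / emb Q = emb (Polynomial.C u⁻¹ * P) := by
        rw [eq_comm, eq_div_iff (emb_ne_zero hQ), ← emb_mul, ← hu]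
        congr 1
        rw [mul_comm, ← mul_assoc, ← Polynomial.C_mul, mul_inv_cancel₀ hune,
          Polynomial.C_1, one_mul]
      set P' := Polynomial.C u⁻¹ * P with hP'
      have hfr : f - emb P / emb Q ≠ 0 := sub_rat_ne hf ⟨P, Q, hQ, rfl⟩
      have hordge : (0 : ℤ) ≤ (f - emb P / emb Q).order := by
        have h1 : ν' * (Q.natDegree : ℝ) ≤ (((f - emb P / emb Q).order : ℤ) : ℝ) :=
          (cond_iff hfr hQ ν').mp habs
        rw [hQ0] at h1
        push_cast at h1
        have : (0:ℝ) ≤ (((f - emb P / emb Q).order : ℤ) : ℝ) := by linarith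
        exact_mod_cast this
      -- all negative coefficients of f - emb P' vanish
      have hcoeff : ∀ j : ℕ, 1 ≤ j → f.coeff (-(j:ℤ)) = P'.coeff j := by
        intro j hj
        have : (f - emb P / emb Q).coeff (-(j:ℤ)) = 0 :=
          coeff_eq_zero_of_lt_order (by omega)
        rw [hPQ, HahnSeries.coeff_sub, sub_eq_zero] at this
        rw [this, emb_coeff]
      -- P' = intPart f + C c
      have hP'eq : P' = intPart f + Polynomial.C (P'.coeff 0 - (intPart f).coeff 0) := by
        ext j
        rcases Nat.eq_zero_or_pos j with hj | hj
        · subst hj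
          simp only [Polynomial.coeff_add, Polynomial.coeff_C_zero]
          ring
        · rw [Polynomial.coeff_add, Polynomial.coeff_C,
            if_neg (by omega), add_zero, intPart_coeff]
          by_cases hcase : (j : ℤ) < 1 - f.order
          · rw [if_pos hcase, hcoeff j hj]
          · rw [if_neg hcase, ← hcoeff j hj]
            exact coeff_eq_zero_of_lt_order (by omega)
      apply hrE
      rw [hE]
      refine ⟨P'.coeff 0 - (intPart f).coeff 0, Set.mem_univ _, ?_⟩
      show emb (intPart f + Polynomial.C (P'.coeff 0 - (intPart f).coeff 0)) = emb P / emb Q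
      rw [← hP'eq, ← hPQ]
    · obtain ⟨n, hn1, hreq, hineq⟩ := best_approx hcf hf hd hν hQ hcop habs hQ1
      exact ⟨n, ⟨hn1, hineq⟩, hreq⟩
  choose! φ hφ using hstep
  have himg : φ '' ({r : LaurentSeries Fq | ∃ P Q : Polynomial Fq, Q ≠ 0 ∧ IsCoprime P Q ∧
      r = emb P / emb Q ∧ absK (f - r) ≤ (absK (emb Q)) ^ (-ν')} \ E) ⊆
      {n : ℕ | 1 ≤ n ∧ ν' * (S a n : ℝ) ≤ (S a n : ℝ) + (S a (n + 1) : ℝ)} := by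
    rintro m ⟨r, hr, rfl⟩
    exact (hφ r hr).1
  refine Set.Infinite.mono himg (hT.image ?_)
  intro r1 h1 r2 h2 heq
  rw [(hφ r1 h1).2, (hφ r2 h2).2, heq]

end CFAux
end Part7
section Part8
open HahnSeries Filter
open scoped ENNReal

namespace CFAux

variable {f : LaurentSeries Fq} {h : ℕ → LaurentSeries Fq} {a : ℕ → Polynomial Fq}

lemma ofReal_two : ENNReal.ofReal (2 : ℝ) = 2 := by
  norm_num [ENNReal.ofReal_eq_ofNat]

lemma nu_eq (hcf : ContFrac f h a) (hf : IrrationalLS f)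
    (hd : ∀ i : ℕ, 1 ≤ i → 0 < (a i).natDegree) :
    nu f = 2 + Filter.limsup
      (fun n : ℕ => ((a (n + 1)).natDegree : ℝ≥0∞) / (S a n : ℝ≥0∞)) Filter.atTop := by
  set R : ℕ → ℝ≥0∞ := fun n => ((a (n + 1)).natDegree : ℝ≥0∞) / (S a n : ℝ≥0∞) with hR
  set L := Filter.limsup R Filter.atTop with hL
  apply le_antisymm
  · -- nu ≤ 2 + L
    apply sSup_le
    rintro x ⟨ν', hν', rfl⟩
    rcases le_or_gt ν' 2 with hcase | hcase
    · calc ENNReal.ofReal ν' ≤ ENNReal.ofReal 2 := ENNReal.ofReal_le_ofReal hcase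
        _ = 2 := ofReal_two
        _ ≤ 2 + L := le_self_add
    · have hinf := nuSet_infinite_indices hcf hf hd hcase hν'
      have hfreq : ∃ᶠ n in Filter.atTop,
          (1 ≤ n ∧ ν' * (S a n : ℝ) ≤ (S a n : ℝ) + (S a (n + 1) : ℝ)) :=
        Nat.frequently_atTop_iff_infinite.mpr hinf
      have hfreq2 : ∃ᶠ n in Filter.atTop, ENNReal.ofReal (ν' - 2) ≤ R n := by
        refine hfreq.mono ?_
        rintro n ⟨hn1, hn2⟩
        have hS1 : 1 ≤ S a n := le_trans hn1 (le_S hd n)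
        have hreal : (ν' - 2) * (S a n : ℝ) ≤ ((a (n + 1)).natDegree : ℝ) := by
          have := S_succ a n
          have hcast : (S a (n + 1) : ℝ) = (S a n : ℝ) + ((a (n + 1)).natDegree : ℝ) := by
            exact_mod_cast congrArg (Nat.cast : ℕ → ℝ) this
          nlinarith [hn2]
        rw [hR]
        rw [ENNReal.le_div_iff_mul_le (Or.inl (Nat.cast_ne_zero.mpr (by omega)))
          (Or.inl (ENNReal.natCast_ne_top _))]
        calc ENNReal.ofReal (ν' - 2) * (S a n : ℝ≥0∞)
            = ENNReal.ofReal ((ν' - 2) * (S a n : ℝ)) := by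
              rw [ENNReal.ofReal_mul (by linarith), ENNReal.ofReal_natCast]
          _ ≤ ENNReal.ofReal ((a (n + 1)).natDegree : ℝ) := ENNReal.ofReal_le_ofReal hreal
          _ = ((a (n + 1)).natDegree : ℝ≥0∞) := ENNReal.ofReal_natCast _
      have hle : ENNReal.ofReal (ν' - 2) ≤ L := Filter.le_limsup_of_frequently_le hfreq2
      have : ENNReal.ofReal ν' = 2 + ENNReal.ofReal (ν' - 2) := by
        rw [show ν' = 2 + (ν' - 2) by ring, ENNReal.ofReal_add (by norm_num) (by linarith),
          ofReal_two]
        ring_nf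
      rw [this]
      exact add_le_add le_rfl hle
  · -- 2 + L ≤ nu
    refine le_of_forall_lt ?_
    intro c hc
    have hmax : max c 1 < 2 + L := by
      rw [max_lt_iff]
      exact ⟨hc, lt_of_lt_of_le (by norm_num : (1 : ℝ≥0∞) < 2) le_self_add⟩
    obtain ⟨b, hb1, hb2⟩ := exists_between hmax
    have hbt : b ≠ ⊤ := (lt_of_lt_of_le hb2 le_top).ne
    have hb0 : b ≠ 0 := by
      intro h0
      rw [h0] at hb1
      exact absurd (lt_of_le_of_lt (le_max_right c 1) hb1) (by simp)
    set ν' := b.toReal with hν'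
    have hν'pos : 0 < ν' := ENNReal.toReal_pos hb0 hbt
    have hofb : ENNReal.ofReal ν' = b := ENNReal.ofReal_toReal hbt
    have hmem : ν' ∈ nuSet f := by
      apply mem_nuSet hcf hf hd hν'pos
      rcases le_or_gt ν' 2 with hcase | hcase
      · have : {n : ℕ | ν' * (S a n : ℝ) ≤ (S a n : ℝ) + (S a (n + 1) : ℝ)} = Set.univ := by
          apply Set.eq_univ_of_forall
          intro n
          have hmono : (S a n : ℝ) ≤ (S a (n + 1) : ℝ) := by
            exact_mod_cast S_mono a (Nat.le_succ n)
          have hpos : (0 : ℝ) ≤ (S a n : ℝ) := Nat.cast_nonneg _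
          show ν' * (S a n : ℝ) ≤ (S a n : ℝ) + (S a (n + 1) : ℝ)
          nlinarith
        rw [this]
        exact Set.infinite_univ
      · have hlt : ENNReal.ofReal (ν' - 2) < L := by
          by_contra hcon
          push_neg at hcon
          have : (2 : ℝ≥0∞) + L ≤ 2 + ENNReal.ofReal (ν' - 2) := add_le_add le_rfl hcon
          have h2 : (2 : ℝ≥0∞) + ENNReal.ofReal (ν' - 2) = b := by
            rw [← ofReal_two, ← ENNReal.ofReal_add (by norm_num) (by linarith), ← hofb]
            congr 1
            ring
          rw [h2] at this
          exact absurd hb2 (not_lt.mpr this)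
        have hfreq := Filter.frequently_lt_of_lt_limsup (by isBoundedDefault) hlt
        have hfreq2 : ∃ᶠ n in Filter.atTop,
            ν' * (S a n : ℝ) ≤ (S a n : ℝ) + (S a (n + 1) : ℝ) := by
          refine hfreq.mono ?_
          intro n hn
          rcases Nat.eq_zero_or_pos (S a n) with hS0 | hS1
          · rw [hS0]
            push_cast
            have hnn : (0 : ℝ) ≤ (S a (n + 1) : ℝ) := Nat.cast_nonneg _
            linarith
          · rw [hR, ENNReal.lt_div_iff_mul_lt (Or.inl (Nat.cast_ne_zero.mpr (by omega)))
              (Or.inl (ENNReal.natCast_ne_top _))] at hn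
            have hreal : (ν' - 2) * (S a n : ℝ) < ((a (n + 1)).natDegree : ℝ) := by
              have hchain : ENNReal.ofReal ((ν' - 2) * (S a n : ℝ)) <
                  ENNReal.ofReal ((a (n + 1)).natDegree : ℝ) := by
                rw [ENNReal.ofReal_mul (by linarith), ENNReal.ofReal_natCast,
                  ENNReal.ofReal_natCast]
                exact hn
              rw [ENNReal.ofReal_lt_ofReal_iff_of_nonneg
                (mul_nonneg (by linarith) (Nat.cast_nonneg _))] at hchain
              exact hchain
            have hcast : (S a (n + 1) : ℝ) = (S a n : ℝ) + ((a (n + 1)).natDegree : ℝ) := by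
              exact_mod_cast congrArg (Nat.cast : ℕ → ℝ) (S_succ a n)
            nlinarith
        exact Nat.frequently_atTop_iff_infinite.mp hfreq2
    have hfinal : ENNReal.ofReal ν' ≤ nu f := le_sSup ⟨ν', hmem, rfl⟩
    rw [hofb] at hfinal
    exact lt_of_lt_of_le (lt_of_le_of_lt (le_max_left c 1) hb1) hfinal

end CFAux
end Part8
section Part9
open Filter
open scoped ENNReal

namespace CFAux

variable {f : LaurentSeries Fq} {h : ℕ → LaurentSeries Fq} {a : ℕ → Polynomial Fq}

lemma phi_mono : Monotone (fun x : ℝ≥0∞ => 1 - 2 / (x + 2)) := by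
  intro x y hxy
  apply tsub_le_tsub_left
  exact ENNReal.div_le_div le_rfl (add_le_add hxy le_rfl)

lemma phi_cont : Continuous (fun x : ℝ≥0∞ => 1 - 2 / (x + 2)) := by
  have h1 : Continuous (fun x : ℝ≥0∞ => 2 / (x + 2)) := by
    have : (fun x : ℝ≥0∞ => 2 / (x + 2)) = (fun y : ℝ≥0∞ => 2 * y) ∘
        (fun x : ℝ≥0∞ => (x + 2)⁻¹) := by
      funext x
      simp [div_eq_mul_inv]
    rw [this]
    exact (ENNReal.continuous_const_mul (by norm_num)).comp
      ((continuous_id.add continuous_const).inv)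
  exact (ENNReal.continuous_sub_left (by norm_num)).comp h1

lemma pointwise_phi (hd : ∀ i : ℕ, 1 ≤ i → 0 < (a i).natDegree) {n : ℕ} (hn : 1 ≤ n) :
    ((a (n + 1)).natDegree : ℝ≥0∞) /
      (((a (n + 1)).natDegree : ℝ≥0∞) + 2 * ∑ i ∈ Finset.Icc 1 n, ((a i).natDegree : ℝ≥0∞))
    = 1 - 2 / (((a (n + 1)).natDegree : ℝ≥0∞) / (S a n : ℝ≥0∞) + 2) := by
  have hsum : ∑ i ∈ Finset.Icc 1 n, ((a i).natDegree : ℝ≥0∞) = ((S a n : ℕ) : ℝ≥0∞) := by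
    rw [S, Nat.cast_sum]
  rw [hsum]
  set D : ℝ≥0∞ := ((a (n + 1)).natDegree : ℝ≥0∞) with hD
  set SS : ℝ≥0∞ := ((S a n : ℕ) : ℝ≥0∞) with hSS
  have hS1 : 1 ≤ S a n := le_trans hn (le_S hd n)
  have hSS0 : SS ≠ 0 := by simp only [hSS, ne_eq, Nat.cast_eq_zero]; omega
  have hSSt : SS ≠ ⊤ := ENNReal.natCast_ne_top _
  have hD0 : D ≠ 0 := by
    simp only [hD, ne_eq, Nat.cast_eq_zero]
    have := hd (n + 1) (by omega)
    omega
  have hDt : D ≠ ⊤ := ENNReal.natCast_ne_top _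
  set T : ℝ≥0∞ := D + 2 * SS with hT
  have hT0 : T ≠ 0 := by
    intro h0
    rw [hT, add_eq_zero] at h0
    exact hD0 h0.1
  have hTt : T ≠ ⊤ := by
    rw [hT]
    exact ENNReal.add_ne_top.mpr ⟨hDt, ENNReal.mul_ne_top (by norm_num) hSSt⟩
  have step1 : D / SS + 2 = T / SS := by
    rw [hT, ENNReal.add_div, mul_div_assoc, ENNReal.div_self hSS0 hSSt, mul_one]
  have step2 : 2 / (T / SS) = 2 * SS / T := by
    rw [div_eq_mul_inv, ENNReal.inv_div (Or.inl hSSt) (Or.inl hSS0), mul_div_assoc]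
  have step3 : (1 : ℝ≥0∞) - 2 * SS / T = D / T := by
    apply ENNReal.sub_eq_of_eq_add
    · intro h0
      rw [ENNReal.div_eq_top] at h0
      rcases h0 with ⟨_, hc⟩ | ⟨hc, _⟩
      · exact hT0 hc
      · exact (ENNReal.mul_ne_top (by norm_num) hSSt) hc
    · rw [ENNReal.div_add_div_same, ← hT, ENNReal.div_self hT0 hTt]
  rw [step1, step2, step3]

lemma limsup_phi (hcf : ContFrac f h a) (hf : IrrationalLS f)
    (hd : ∀ i : ℕ, 1 ≤ i → 0 < (a i).natDegree) :
    Filter.limsup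
      (fun n : ℕ => ((a (n + 1)).natDegree : ℝ≥0∞) /
        (((a (n + 1)).natDegree : ℝ≥0∞) +
          2 * ∑ i ∈ Finset.Icc 1 n, ((a i).natDegree : ℝ≥0∞)))
      Filter.atTop = 1 - 2 / nu f := by
  set R : ℕ → ℝ≥0∞ := fun n => ((a (n + 1)).natDegree : ℝ≥0∞) / (S a n : ℝ≥0∞) with hR
  have hcong : Filter.limsup
      (fun n : ℕ => ((a (n + 1)).natDegree : ℝ≥0∞) /
        (((a (n + 1)).natDegree : ℝ≥0∞) +
          2 * ∑ i ∈ Finset.Icc 1 n, ((a i).natDegree : ℝ≥0∞)))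
      Filter.atTop
      = Filter.limsup ((fun x : ℝ≥0∞ => 1 - 2 / (x + 2)) ∘ R) Filter.atTop := by
    apply Filter.limsup_congr
    filter_upwards [Filter.eventually_ge_atTop 1] with n hn
    exact pointwise_phi hd hn
  rw [hcong, ← Monotone.map_limsup_of_continuousAt phi_mono R phi_cont.continuousAt]
  rw [nu_eq hcf hf hd, add_comm (2 : ℝ≥0∞) _]

end CFAux
end Part9

/-- 2 - 2/ν = 1 + limsup_n log|a_{n+1}| / log|a_{n+1} ∏_{i=1}^n a_i²|,
equivalently 2/ν = 1 - limsup_n deg a_{n+1} / (deg a_{n+1} + 2 ∑_{i=1}^n deg a_i);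
since |g| = q^{deg g}, the logarithmic ratio is exactly the ratio of degrees, and the
identity is stated in [0,∞] via that ratio. -/
theorem stmt6 (f : LaurentSeries Fq) (hf : IrrationalLS f)
    (h : ℕ → LaurentSeries Fq) (a : ℕ → Polynomial Fq) (hcf : ContFrac f h a)
    (hdeg : ∀ i : ℕ, 1 ≤ i → 0 < (a i).natDegree) :
    (2 : ℝ≥0∞) - 2 / nu f =
      1 + Filter.limsup
        (fun n : ℕ => ((a (n + 1)).natDegree : ℝ≥0∞) /
          (((a (n + 1)).natDegree : ℝ≥0∞) +
            2 * ∑ i ∈ Finset.Icc 1 n, ((a i).natDegree : ℝ≥0∞)))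
        Filter.atTop ∧
    (2 : ℝ≥0∞) / nu f =
      1 - Filter.limsup
        (fun n : ℕ => ((a (n + 1)).natDegree : ℝ≥0∞) /
          (((a (n + 1)).natDegree : ℝ≥0∞) +
            2 * ∑ i ∈ Finset.Icc 1 n, ((a i).natDegree : ℝ≥0∞)))
        Filter.atTop := by
  have hd : ∀ i : ℕ, 1 ≤ i → 0 < (a i).natDegree := hdeg
  have hL := CFAux.limsup_phi hcf hf hd
  have hnu2 : (2 : ℝ≥0∞) ≤ nu f := by
    rw [CFAux.nu_eq hcf hf hd]
    exact le_self_add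
  have hdiv : 2 / nu f ≤ 1 := by
    calc 2 / nu f ≤ 2 / 2 := ENNReal.div_le_div le_rfl hnu2
      _ = 1 := ENNReal.div_self (by norm_num) (by norm_num)
  constructor
  · rw [hL]
    have hxt : 2 / nu f ≠ ∞ := (lt_of_le_of_lt hdiv (by norm_num)).ne
    refine (ENNReal.eq_sub_of_add_eq hxt ?_).symm
    rw [add_assoc, tsub_add_cancel_of_le hdiv]
    norm_num
  · rw [hL, ENNReal.sub_sub_cancel (by norm_num) hdiv]
end
end

section
/- In a CAT(-1) geodesic metric space X, let x ∈ X and y, z ∈ X be such that x is the closest point to z on the geodesic segment [x,y] (equivalently, the comparison angle at x between z and y is at least π/2). Then d(x, [y,z]) ≤ log(1+√2). -/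
noncomputable section

open Filter

variable {X : Type*} [MetricSpace X]

/-- `γ` is a (unit-speed) geodesic segment from `x` to `y`, parametrized by `[0, d(x,y)]`. -/
def IsGeodSeg (γ : ℝ → X) (x y : X) : Prop :=
  γ 0 = x ∧ γ (dist x y) = y ∧
    ∀ s ∈ Set.Icc (0 : ℝ) (dist x y), ∀ t ∈ Set.Icc (0 : ℝ) (dist x y),
      dist (γ s) (γ t) = |s - t|

/-- `v` is a geodesic line: an isometric map ℝ → X. -/
def IsGeodLine (v : ℝ → X) : Prop := ∀ s t : ℝ, dist (v s) (v t) = |s - t|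

/-- `ρ` is a geodesic ray, parametrized by `[0,∞)`. -/
def IsGeodRay (ρ : ℝ → X) : Prop :=
  ∀ s t : ℝ, 0 ≤ s → 0 ≤ t → dist (ρ s) (ρ t) = |s - t|

/-- `X` is a CAT(-1) geodesic space: it is geodesic, and for any geodesic triangle
with a comparison triangle of the same side lengths in the real hyperbolic plane ℍ²
(of curvature -1, modelled by `UpperHalfPlane` with its hyperbolic metric), the
distance from a vertex to a point of the opposite side is at most the distance between
the comparison points. -/
def CATm1 (X : Type*) [MetricSpace X] : Prop :=
  (∀ x y : X, ∃ γ : ℝ → X, IsGeodSeg γ x y) ∧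
  ∀ (x y z : X) (γ : ℝ → X), IsGeodSeg γ y z →
    ∀ (x' y' z' : UpperHalfPlane) (γ' : ℝ → UpperHalfPlane), IsGeodSeg γ' y' z' →
      dist x y = dist x' y' → dist x z = dist x' z' → dist y z = dist y' z' →
      ∀ t ∈ Set.Icc (0 : ℝ) (dist y z), dist x (γ t) ≤ dist x' (γ' t)

/-- The constant c₁ = log(1+√2). -/
def c₁ : ℝ := Real.log (1 + Real.sqrt 2)

/-- The constant c₂ = 2 log((1+√3)/2). -/
def c₂ : ℝ := 2 * Real.log ((1 + Real.sqrt 3) / 2)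

namespace Stmt8Aux
open Real
local notation "ℍ" => UpperHalfPlane

def pt (a b : ℝ) (hb : 0 < b) : ℍ := UpperHalfPlane.mk ⟨a, b⟩ hb

@[simp] lemma pt_re (a b : ℝ) (hb : 0 < b) : (pt a b hb).re = a := rfl
@[simp] lemma pt_im (a b : ℝ) (hb : 0 < b) : (pt a b hb).im = b := rfl

lemma pt_ext {a b a' b' : ℝ} (hb : 0 < b) (hb' : 0 < b') (h1 : a = a') (h2 : b = b') :
    pt a b hb = pt a' b' hb' := by subst h1; subst h2; rfl

lemma dist_eq_of_cosh (z w : ℍ) (d : ℝ) (hd : 0 ≤ d)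
    (h : Real.cosh (dist z w) = Real.cosh d) : dist z w = d :=
  Real.cosh_strictMonoOn.injOn (Set.mem_Ici.2 dist_nonneg) (Set.mem_Ici.2 hd) h

lemma le_of_cosh_le {d e : ℝ} (hd : 0 ≤ d) (he : 0 ≤ e)
    (h : Real.cosh d ≤ Real.cosh e) : d ≤ e := by
  have := Real.cosh_le_cosh.1 h
  rwa [abs_of_nonneg hd, abs_of_nonneg he] at this

def vpt (t : ℝ) : ℍ := pt 0 (Real.exp t) (Real.exp_pos t)

@[simp] lemma vpt_re (t : ℝ) : (vpt t).re = 0 := rfl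
@[simp] lemma vpt_im (t : ℝ) : (vpt t).im = Real.exp t := rfl

lemma vpt_dist (s t : ℝ) : dist (vpt s) (vpt t) = |s - t| := by
  rw [UpperHalfPlane.dist_of_re_eq (z := vpt s) (w := vpt t) rfl]
  simp [vpt, Real.dist_eq, Real.log_exp]

def arcpt (c r : ℝ) (hr : 0 < r) (t : ℝ) : ℍ :=
  pt (c + r * Real.tanh t) (r / Real.cosh t) (by have := Real.cosh_pos t; positivity)

lemma arc_dist (c r : ℝ) (hr : 0 < r) (s t : ℝ) :
    dist (arcpt c r hr s) (arcpt c r hr t) = |s - t| := by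
  apply dist_eq_of_cosh _ _ _ (abs_nonneg _)
  rw [UpperHalfPlane.cosh_dist', Real.cosh_abs]
  have hs := Real.cosh_pos s
  have ht := Real.cosh_pos t
  rw [div_eq_iff (by simp only [arcpt, pt_im]; positivity)]
  simp only [arcpt, pt_im, pt_re]
  rw [Real.cosh_sub, Real.tanh_eq_sinh_div_cosh, Real.tanh_eq_sinh_div_cosh]
  have h1 := Real.cosh_sq s
  have h2 := Real.cosh_sq t
  field_simp
  linear_combination (-(r^2 * Real.cosh t^2)) * h1 -
    (r^2 * Real.cosh s^2) * h2

lemma arc_point (c r : ℝ) (hr : 0 < r) (x y : ℝ) (hy : 0 < y) (h : (x - c)^2 + y^2 = r^2) :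
    arcpt c r hr (Real.arsinh ((x - c)/y)) = pt x y hy := by
  have hcosh : Real.cosh (Real.arsinh ((x - c)/y)) = r / y := by
    rw [Real.cosh_arsinh]
    rw [show 1 + ((x-c)/y)^2 = (r/y)^2 by field_simp; linarith]
    exact Real.sqrt_sq (by positivity)
  apply pt_ext
  · rw [Real.tanh_eq_sinh_div_cosh, Real.sinh_arsinh, hcosh]
    field_simp; ring
  · rw [hcosh]; field_simp

lemma ratio_mono {s1 s2 y1 y2 r : ℝ} (hs1 : 0 < s1) (h12 : s1 ≤ s2) (hy1 : 0 < y1)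
    (hy2 : 0 < y2) (h1 : s1^2 + y1^2 = r^2) (h2 : s2^2 + y2^2 = r^2) :
    s1/y1 ≤ s2/y2 := by
  rw [div_le_div_iff₀ hy1 hy2]
  have hsq : (s1*y2)^2 ≤ (s2*y1)^2 := by
    nlinarith [mul_nonneg (sq_nonneg r) (mul_nonneg (sub_nonneg.2 h12)
      (add_pos hs1 (hs1.trans_le h12)).le)]
  nlinarith [add_pos (mul_pos hs1 hy2) (mul_pos (hs1.trans_le h12) hy1), hsq]

lemma zY_pos (m θ : ℝ) (hm : 0 ≤ m) : 0 < Real.cosh m + Real.sinh m * Real.cos θ := by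
  have h1 : Real.cosh m - Real.sinh m = Real.exp (-m) := Real.cosh_sub_sinh m
  have h2 := Real.exp_pos (-m)
  have h3 : 0 ≤ Real.sinh m := Real.sinh_nonneg_iff.2 hm
  nlinarith [Real.neg_one_le_cos θ]

def zpt (m θ : ℝ) (hm : 0 ≤ m) : ℍ :=
  pt (Real.sinh m * Real.sin θ) (Real.cosh m + Real.sinh m * Real.cos θ) (zY_pos m θ hm)

@[simp] lemma zpt_re (m θ : ℝ) (hm : 0 ≤ m) : (zpt m θ hm).re = Real.sinh m * Real.sin θ := rfl
@[simp] lemma zpt_im (m θ : ℝ) (hm : 0 ≤ m) :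
    (zpt m θ hm).im = Real.cosh m + Real.sinh m * Real.cos θ := rfl

lemma dist_i_zpt (m θ : ℝ) (hm : 0 ≤ m) : dist (vpt 0) (zpt m θ hm) = m := by
  apply dist_eq_of_cosh _ _ _ hm
  rw [UpperHalfPlane.cosh_dist']
  have hY := zY_pos m θ hm
  rw [div_eq_iff (by simp only [vpt_im, zpt_im, Real.exp_zero]; positivity)]
  simp only [vpt_im, vpt_re, zpt_im, zpt_re, Real.exp_zero]
  have h1 := Real.cosh_sq m
  have h2 := Real.sin_sq_add_cos_sq θ
  linear_combination (Real.sinh m ^ 2) * h2 - h1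

lemma zpt_zero (m : ℝ) (hm : 0 ≤ m) : zpt m 0 hm = vpt m := by
  apply pt_ext
  · simp
  · simp [Real.cosh_add_sinh]

lemma zpt_pi (m : ℝ) (hm : 0 ≤ m) : zpt m Real.pi hm = vpt (-m) := by
  apply pt_ext
  · simp
  · simp only [Real.cos_pi, mul_neg_one]
    linarith [Real.cosh_sub_sinh m]

lemma cosh_c₁ : Real.cosh c₁ = Real.sqrt 2 := by
  have h2 : Real.sqrt 2 ^ 2 = 2 := Real.sq_sqrt (by norm_num)
  have hs : 0 < Real.sqrt 2 := Real.sqrt_pos.2 (by norm_num)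
  have hpos : (0:ℝ) < 1 + Real.sqrt 2 := by linarith
  rw [c₁, Real.cosh_eq, Real.exp_log hpos, Real.exp_neg, Real.exp_log hpos]
  rw [div_eq_iff (by norm_num)]
  field_simp
  nlinarith [h2, hs]

lemma c₁_pos : 0 < c₁ :=
  Real.log_pos (by nlinarith [Real.sqrt_pos.2 (show (0:ℝ) < 2 by norm_num)])

lemma exp_c₁ : Real.exp c₁ = 1 + Real.sqrt 2 :=
  Real.exp_log (by nlinarith [Real.sqrt_pos.2 (show (0:ℝ) < 2 by norm_num)])

set_option maxHeartbeats 1000000 in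
lemma key_alg {p XX Y c x0 : ℝ} (hp : 1 + Real.sqrt 2 ≤ p) (hX : 0 < XX)
    (hS : XX^2 + Y^2 ≤ 1)
    (hc : 2*XX*c = XX^2 + Y^2 - p^2)
    (hx0 : x0 * (2*(c^2+2)) = -c*(p^2-3)) :
    0 ≤ x0 ∧ x0 ≤ XX ∧ (p^2 + 1 + 2*c*x0)^2 ≤ 8*((c^2+p^2) - (x0-c)^2) ∧ c < 0 := by
  have hs2 : Real.sqrt 2 ^ 2 = 2 := Real.sq_sqrt (by norm_num)
  have hs2p : 0 < Real.sqrt 2 := Real.sqrt_pos.2 (by norm_num)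
  have hp1 : 1 ≤ p := by nlinarith
  have hp3 : 3 ≤ p^2 := by nlinarith
  have hcneg : c < 0 := by
    rcases lt_or_ge c 0 with h|h
    · exact h
    · exfalso; nlinarith [mul_nonneg (mul_nonneg (by norm_num : (0:ℝ) ≤ 2) hX.le) h]
  have hx0nn : 0 ≤ x0 := by
    nlinarith [mul_nonneg (neg_nonneg.2 hcneg.le) (show (0:ℝ) ≤ p^2-3 by linarith),
      (show (0:ℝ) < 2*(c^2+2) by positivity)]
  have hE : (XX - x0) * (2*(c^2+2)) * (2*XX)
      = (p^2 - (XX^2+Y^2))*(3 - (XX^2+Y^2)) + 8*XX^2 := by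
    linear_combination (2*XX*c + XX^2 + Y^2 - 3) * hc - (2*XX) * hx0
  have hXx0 : x0 ≤ XX := by
    nlinarith [hE, mul_nonneg
        (show (0:ℝ) ≤ p^2 - (XX^2+Y^2) by nlinarith [sq_nonneg XX, sq_nonneg Y])
        (show (0:ℝ) ≤ 3 - (XX^2+Y^2) by linarith),
      mul_pos (show (0:ℝ) < 2*(c^2+2) by positivity) (show (0:ℝ) < 2*XX by linarith),
      mul_pos hX hX]
  have hsq : 4*c^2*XX^2 = (p^2 - (XX^2+Y^2))^2 := by
    linear_combination (2*XX*c + (XX^2+Y^2-p^2)) * hc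
  have hXX1 : XX^2 ≤ 1 := by nlinarith [sq_nonneg Y]
  have step : 0 ≤ (p^2-(XX^2+Y^2))^2 - (p^4-6*p^2+1)*XX^2 := by
    nlinarith [mul_nonneg (show (0:ℝ) ≤ 1-(XX^2+Y^2) by linarith)
        (show (0:ℝ) ≤ 2*p^2-(XX^2+Y^2)-1 by nlinarith),
      mul_nonneg (sub_nonneg.2 hXX1) (sq_nonneg (p^2-1)),
      mul_nonneg (mul_nonneg (by norm_num : (0:ℝ) ≤ 4) (sq_nonneg p)) (sq_nonneg XX)]
  have h4c : p^4 - 6*p^2 + 1 ≤ 4*c^2 := by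
    nlinarith [step, hsq, mul_pos hX hX]
  have hAE : (4*c^2+8) * (8*((c^2+p^2) - (x0-c)^2) - (p^2 + 1 + 2*c*x0)^2)
      = 8*(4*c^2 - (p^4-6*p^2+1)) := by
    linear_combination (-4*(x0*(2*(c^2+2)) + c*(p^2-3))) * hx0
  have final : (p^2+1+2*c*x0)^2 ≤ 8*((c^2+p^2) - (x0-c)^2) := by
    nlinarith [hAE, h4c, (show (0:ℝ) < 4*c^2+8 by positivity)]
  exact ⟨hx0nn, hXx0, final, hcneg⟩

lemma sq_le_helper {A y0 : ℝ} (hy0 : 0 < y0) (hA : 0 < A) (h8 : A^2 ≤ 8 * y0^2) :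
    A ≤ Real.sqrt 2 * (2 * y0) := by
  have hs2 : Real.sqrt 2 ^ 2 = 2 := Real.sq_sqrt (by norm_num)
  have hs2p : 0 < Real.sqrt 2 := Real.sqrt_pos.2 (by norm_num)
  nlinarith [mul_pos hs2p hy0, hA, h8, hs2]

lemma S_le_one {bb M XX YY : ℝ} (hbb : 0 < bb) (hYY : 0 < YY)
    (hmeq : Real.cosh M = (XX^2 + YY^2 + 1)/(2*YY))
    (hobt : ∀ s ∈ Set.Icc (0:ℝ) bb,
      Real.cosh M ≤ ((XX - 0)^2 + YY^2 + Real.exp s^2)/(2*YY*Real.exp s)) :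
    XX^2 + YY^2 ≤ 1 := by
  by_contra h1
  push_neg at h1
  obtain ⟨E, hE⟩ : ∃ E, E = min (Real.exp bb) ((1 + (XX^2+YY^2))/2) := ⟨_, rfl⟩
  have hE1 : 1 < E := by
    rw [hE]
    exact lt_min (by rw [← Real.exp_zero]; exact Real.exp_lt_exp.2 hbb) (by linarith)
  have hEb : E ≤ Real.exp bb := by rw [hE]; exact min_le_left _ _
  have hES : E < XX^2 + YY^2 := by
    rw [hE]
    exact lt_of_le_of_lt (min_le_right _ _) (by linarith)
  have hEpos : (0:ℝ) < E := by linarith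
  have h2 := hobt (Real.log E) ⟨Real.log_nonneg hE1.le, by
    rw [← Real.log_exp bb]; exact Real.log_le_log hEpos hEb⟩
  rw [hmeq, Real.exp_log hEpos, div_le_div_iff₀ (by positivity) (by positivity)] at h2
  nlinarith [h2, mul_pos (mul_pos (sub_pos.2 hE1) (sub_pos.2 hES)) hYY]

/-- The vertical-chord case: `z'` on the imaginary axis below `i`. -/
lemma main_H0 (b a Y : ℝ) (hb : 0 < b) (hYpos : 0 < Y) (hY1 : Y ≤ 1)
    (hdza : dist (vpt b) (pt 0 Y hYpos) = a) :
    ∃ σ : ℝ → ℍ, IsGeodSeg σ (vpt b) (pt 0 Y hYpos) ∧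
      ∃ t ∈ Set.Icc (0:ℝ) a, dist (vpt 0) (σ t) ≤ c₁ := by
  have hlog : Real.log Y ≤ 0 := Real.log_nonpos hYpos.le hY1
  have hz' : pt 0 Y hYpos = vpt (Real.log Y) :=
    pt_ext _ _ rfl (Real.exp_log hYpos).symm
  have hda : a = b - Real.log Y := by
    rw [← hdza, hz', vpt_dist, abs_of_nonneg (by linarith)]
  refine ⟨fun t => vpt (b - t), ⟨?_, ?_, ?_⟩, b, ⟨hb.le, by linarith⟩, ?_⟩
  · show vpt (b - 0) = vpt b
    rw [sub_zero]
  · show vpt (b - dist (vpt b) (pt 0 Y hYpos)) = pt 0 Y hYpos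
    rw [hdza, hz']
    congr 1
    rw [hda]
    ring
  · intro s _ t _
    show dist (vpt (b - s)) (vpt (b - t)) = |s - t|
    rw [vpt_dist, show b - s - (b - t) = -(s - t) by ring, abs_neg]
  · show dist (vpt 0) (vpt (b - b)) ≤ c₁
    rw [sub_self]
    simp only [dist_self]
    exact c₁_pos.le

set_option maxHeartbeats 1000000 in
/-- The main case: `z'` strictly off the imaginary axis, both sides long. -/
lemma main_H1 (b a XX Y : ℝ) (hb : c₁ < b) (ha : 0 ≤ a)
    (hXpos : 0 < XX) (hYpos : 0 < Y) (hS : XX^2 + Y^2 ≤ 1)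
    (hdza : dist (vpt b) (pt XX Y hYpos) = a) :
    ∃ σ : ℝ → ℍ, IsGeodSeg σ (vpt b) (pt XX Y hYpos) ∧
      ∃ t ∈ Set.Icc (0:ℝ) a, dist (vpt 0) (σ t) ≤ c₁ := by
  have hbpos : 0 < b := c₁_pos.trans hb
  set p := Real.exp b with hp_def
  have hs2 : Real.sqrt 2 ^ 2 = 2 := Real.sq_sqrt (by norm_num)
  have hs2p : 0 < Real.sqrt 2 := Real.sqrt_pos.2 (by norm_num)
  have hp : 1 + Real.sqrt 2 ≤ p := by
    rw [← exp_c₁, hp_def]; exact Real.exp_le_exp.2 hb.le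
  have hppos : 0 < p := Real.exp_pos b
  set c := (XX^2 + Y^2 - p^2)/(2*XX) with hc_def
  have hc : 2*XX*c = XX^2 + Y^2 - p^2 := by
    rw [hc_def]; field_simp
  set x0 := -c*(p^2-3)/(2*(c^2+2)) with hx0_def
  have hx0 : x0 * (2*(c^2+2)) = -c*(p^2-3) := by
    rw [hx0_def]; field_simp
  obtain ⟨hx0nn, hx0X, hkey, hcneg⟩ := key_alg hp hXpos hS hc hx0
  have hr2pos : (0:ℝ) < c^2 + p^2 := by positivity
  set r := Real.sqrt (c^2 + p^2) with hr_def
  have hrpos : 0 < r := Real.sqrt_pos.2 hr2pos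
  have hr2 : r^2 = c^2 + p^2 := Real.sq_sqrt hr2pos.le
  have hP : (0 - c)^2 + p^2 = r^2 := by rw [hr2]; ring
  have hQ : (XX - c)^2 + Y^2 = r^2 := by rw [hr2]; linear_combination -hc
  have hy0sqpos : 0 < r^2 - (x0 - c)^2 := by
    nlinarith [hQ, mul_pos hYpos hYpos, (show 0 < x0 - c by linarith),
      (show x0 - c ≤ XX - c by linarith)]
  set y0 := Real.sqrt (r^2 - (x0 - c)^2) with hy0_def
  have hy0pos : 0 < y0 := Real.sqrt_pos.2 hy0sqpos
  have hy0sq : y0^2 = r^2 - (x0 - c)^2 := Real.sq_sqrt hy0sqpos.le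
  have hW : (x0 - c)^2 + y0^2 = r^2 := by rw [hy0sq]; ring
  set τP := Real.arsinh ((0 - c)/p) with hτP_def
  set τW := Real.arsinh ((x0 - c)/y0) with hτW_def
  set τQ := Real.arsinh ((XX - c)/Y) with hτQ_def
  have hparcP : arcpt c r hrpos τP = vpt b :=
    (arc_point c r hrpos 0 p (Real.exp_pos b) hP).trans (pt_ext _ _ rfl rfl)
  have hparcW : arcpt c r hrpos τW = pt x0 y0 hy0pos :=
    arc_point c r hrpos x0 y0 hy0pos hW
  have hparcQ : arcpt c r hrpos τQ = pt XX Y hYpos :=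
    arc_point c r hrpos XX Y hYpos hQ
  have hPW : τP ≤ τW :=
    Real.arsinh_le_arsinh.2 (ratio_mono (by linarith) (by linarith) hppos hy0pos hP hW)
  have hWQ : τW ≤ τQ :=
    Real.arsinh_le_arsinh.2 (ratio_mono (by linarith) (by linarith) hy0pos hYpos hW hQ)
  have hdPQ : a = τQ - τP := by
    rw [← hdza, ← hparcP, ← hparcQ, arc_dist, abs_sub_comm, abs_of_nonneg (by linarith)]
  clear_value τQ τW τP y0 x0 r c p
  refine ⟨fun t => arcpt c r hrpos (τP + t), ⟨?_, ?_, ?_⟩, τW - τP,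
    ⟨by linarith, by rw [hdPQ]; linarith⟩, ?_⟩
  · show arcpt c r hrpos (τP + 0) = vpt b
    rw [add_zero, hparcP]
  · show arcpt c r hrpos (τP + dist (vpt b) (pt XX Y hYpos)) = pt XX Y hYpos
    rw [hdza, hdPQ, show τP + (τQ - τP) = τQ by ring, hparcQ]
  · intro s _ t _
    show dist (arcpt c r hrpos (τP + s)) (arcpt c r hrpos (τP + t)) = |s - t|
    rw [arc_dist, show τP + s - (τP + t) = s - t by ring]
  · show dist (vpt 0) (arcpt c r hrpos (τP + (τW - τP))) ≤ c₁
    rw [show τP + (τW - τP) = τW by ring, hparcW]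
    have hcosh : Real.cosh (dist (vpt 0) (pt x0 y0 hy0pos)) = (x0^2 + y0^2 + 1)/(2*y0) := by
      rw [UpperHalfPlane.cosh_dist']
      simp only [vpt_re, vpt_im, pt_re, pt_im, Real.exp_zero]
      rw [div_eq_div_iff (by positivity) (by positivity)]
      ring
    apply le_of_cosh_le dist_nonneg c₁_pos.le
    rw [hcosh, cosh_c₁, div_le_iff₀ (by positivity)]
    have hxy : x0^2 + y0^2 + 1 = p^2 + 1 + 2*c*x0 := by
      rw [hy0sq, hr2]; ring
    have h8 : (x0^2 + y0^2 + 1)^2 ≤ 8 * y0^2 := by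
      rw [hxy, hy0sq, hr2]; linarith [hkey]
    exact sq_le_helper hy0pos (by positivity) h8

end Stmt8Aux

set_option maxHeartbeats 1000000 in
/-- in a CAT(-1) geodesic space, if `x` is the closest point to `z` on the
segment `[x,y]`, then d(x, [y,z]) ≤ log(1+√2) = c₁. -/
theorem stmt8 (hX : CATm1 X) (x y z : X) (γ : ℝ → X) (hγ : IsGeodSeg γ x y)
    (hclosest : ∀ s ∈ Set.Icc (0 : ℝ) (dist x y), dist z x ≤ dist z (γ s)) :
    ∀ σ : ℝ → X, IsGeodSeg σ y z →
      ∃ t ∈ Set.Icc (0 : ℝ) (dist y z), dist x (σ t) ≤ c₁ := by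
  intro σ hσ
  by_cases hb' : dist x y ≤ c₁
  · exact ⟨0, ⟨le_refl 0, dist_nonneg⟩, by rw [hσ.1]; exact hb'⟩
  by_cases hm' : dist x z ≤ c₁
  · exact ⟨dist y z, ⟨dist_nonneg, le_refl _⟩, by rw [hσ.2.1]; exact hm'⟩
  push_neg at hb' hm'
  open Stmt8Aux Real in
  -- Abbreviations
  have hbpos : 0 < dist x y := Stmt8Aux.c₁_pos.trans hb'
  have hm0 : (0:ℝ) ≤ dist x z := dist_nonneg
  have ha0 : (0:ℝ) ≤ dist y z := dist_nonneg
  -- Build the comparison point z' by IVT on a hyperbolic circle around i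
  set F : ℝ → ℝ := fun θ =>
    ((0 - Real.sinh (dist x z) * Real.sin θ)^2 + Real.exp (dist x y)^2 +
      (Real.cosh (dist x z) + Real.sinh (dist x z) * Real.cos θ)^2) /
    (2 * Real.exp (dist x y) *
      (Real.cosh (dist x z) + Real.sinh (dist x z) * Real.cos θ)) with hF_def
  have hFeq : ∀ θ, F θ =
      Real.cosh (dist (Stmt8Aux.vpt (dist x y)) (Stmt8Aux.zpt (dist x z) θ hm0)) := by
    intro θ
    rw [UpperHalfPlane.cosh_dist']
    simp only [hF_def, Stmt8Aux.vpt_re, Stmt8Aux.vpt_im, Stmt8Aux.zpt_re, Stmt8Aux.zpt_im]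
  have hFcont : ContinuousOn F (Set.Icc 0 Real.pi) := by
    apply ContinuousOn.div
    · fun_prop
    · fun_prop
    · intro θ _
      have := Stmt8Aux.zY_pos (dist x z) θ hm0
      positivity
  have hmem : Real.cosh (dist y z) ∈ Set.Icc (F 0) (F Real.pi) := by
    constructor
    · rw [hFeq 0, Stmt8Aux.zpt_zero, Stmt8Aux.vpt_dist]
      apply Real.cosh_le_cosh.2
      rw [abs_abs, abs_of_nonneg ha0]
      have h := abs_dist_sub_le y z x
      rw [dist_comm y x, dist_comm z x] at h
      exact h
    · rw [hFeq Real.pi, Stmt8Aux.zpt_pi, Stmt8Aux.vpt_dist]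
      apply Real.cosh_le_cosh.2
      rw [abs_of_nonneg ha0, abs_abs]
      have h3 : dist y z ≤ dist x y - -dist x z := by
        have h4 := dist_triangle y x z
        rw [dist_comm y x] at h4
        linarith
      exact h3.trans (le_abs_self _)
  obtain ⟨θ₀, hθ₀, hFθ⟩ := intermediate_value_Icc Real.pi_nonneg hFcont hmem
  have hdza : dist (Stmt8Aux.vpt (dist x y)) (Stmt8Aux.zpt (dist x z) θ₀ hm0) = dist y z :=
    Stmt8Aux.dist_eq_of_cosh _ _ _ ha0 (by rw [← hFeq θ₀, hFθ])
  have hdzm : dist (Stmt8Aux.vpt 0) (Stmt8Aux.zpt (dist x z) θ₀ hm0) = dist x z :=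
    Stmt8Aux.dist_i_zpt (dist x z) θ₀ hm0
  have hdib : dist (Stmt8Aux.vpt 0) (Stmt8Aux.vpt (dist x y)) = dist x y := by
    rw [Stmt8Aux.vpt_dist, abs_of_nonpos (by linarith), neg_sub, sub_zero]
  have hvseg : IsGeodSeg Stmt8Aux.vpt (Stmt8Aux.vpt 0) (Stmt8Aux.vpt (dist x y)) :=
    ⟨rfl, by rw [hdib], fun s _ t _ => Stmt8Aux.vpt_dist s t⟩
  -- First comparison: the obtuse-angle condition transfers to ℍ
  have hcomp1 := hX.2 z x y γ hγ (Stmt8Aux.zpt (dist x z) θ₀ hm0) (Stmt8Aux.vpt 0)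
    (Stmt8Aux.vpt (dist x y)) Stmt8Aux.vpt hvseg
    (by rw [dist_comm z x, dist_comm _ (Stmt8Aux.vpt 0), hdzm])
    (by rw [dist_comm z y, dist_comm _ (Stmt8Aux.vpt (dist x y)), hdza])
    (by rw [hdib])
  have hobt : ∀ s ∈ Set.Icc (0:ℝ) (dist x y),
      dist x z ≤ dist (Stmt8Aux.zpt (dist x z) θ₀ hm0) (Stmt8Aux.vpt s) := by
    intro s hs
    calc dist x z = dist z x := dist_comm x z
      _ ≤ dist z (γ s) := hclosest s hs
      _ ≤ dist (Stmt8Aux.zpt (dist x z) θ₀ hm0) (Stmt8Aux.vpt s) := hcomp1 s hs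
  -- Derive X² + Y² ≤ 1
  have hYpos := Stmt8Aux.zY_pos (dist x z) θ₀ hm0
  set XX := Real.sinh (dist x z) * Real.sin θ₀ with hXX_def
  set YY := Real.cosh (dist x z) + Real.sinh (dist x z) * Real.cos θ₀ with hYY_def
  have hform : ∀ s, Real.cosh (dist (Stmt8Aux.zpt (dist x z) θ₀ hm0) (Stmt8Aux.vpt s))
      = ((XX - 0)^2 + YY^2 + Real.exp s^2) / (2 * YY * Real.exp s) := by
    intro s
    rw [UpperHalfPlane.cosh_dist']
    simp only [Stmt8Aux.vpt_re, Stmt8Aux.vpt_im, Stmt8Aux.zpt_re, Stmt8Aux.zpt_im,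
      hXX_def, hYY_def]
  have hm_eq : Real.cosh (dist x z) = (XX^2 + YY^2 + 1) / (2 * YY) := by
    rw [← hdzm, dist_comm, hform 0, Real.exp_zero]
    ring_nf
  have hS : XX^2 + YY^2 ≤ 1 := by
    apply Stmt8Aux.S_le_one hbpos hYpos hm_eq
    intro s hs
    rw [← hform s]
    exact Real.cosh_le_cosh.2 (by
      rw [abs_of_nonneg hm0, abs_of_nonneg dist_nonneg]; exact hobt s hs)
  -- Case on XX
  have hXnn : 0 ≤ XX := mul_nonneg (Real.sinh_nonneg_iff.2 hm0)
    (Real.sin_nonneg_of_nonneg_of_le_pi hθ₀.1 hθ₀.2)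
  have hmain : ∃ σ'' : ℝ → UpperHalfPlane,
      IsGeodSeg σ'' (Stmt8Aux.vpt (dist x y)) (Stmt8Aux.zpt (dist x z) θ₀ hm0) ∧
      ∃ t ∈ Set.Icc (0:ℝ) (dist y z), dist (Stmt8Aux.vpt 0) (σ'' t) ≤ c₁ := by
    rcases eq_or_lt_of_le hXnn with hX0 | hXpos
    · have hY1 : YY ≤ 1 := by nlinarith [hS, hYpos]
      have hz'eq : Stmt8Aux.zpt (dist x z) θ₀ hm0 = Stmt8Aux.pt 0 YY hYpos :=
        Stmt8Aux.pt_ext _ _ hX0.symm rfl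
      rw [hz'eq]
      exact Stmt8Aux.main_H0 (dist x y) (dist y z) YY hbpos hYpos hY1 (by rw [← hz'eq, hdza])
    · have hz'eq : Stmt8Aux.zpt (dist x z) θ₀ hm0 = Stmt8Aux.pt XX YY hYpos :=
        Stmt8Aux.pt_ext _ _ rfl rfl
      rw [hz'eq]
      exact Stmt8Aux.main_H1 (dist x y) (dist y z) XX YY hb' ha0 hXpos hYpos hS
        (by rw [← hz'eq, hdza])
  obtain ⟨σ'', hσ''seg, t0, ht0, hd0⟩ := hmain
  refine ⟨t0, ht0, ?_⟩
  have hcomp2 := hX.2 x y z σ hσ (Stmt8Aux.vpt 0) (Stmt8Aux.vpt (dist x y))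
    (Stmt8Aux.zpt (dist x z) θ₀ hm0) σ'' hσ''seg (by rw [hdib]) (by rw [hdzm]) (by rw [hdza])
    t0 ht0
  exact hcomp2.trans hd0
end
end

section
/- Let X be a CAT(-1) geodesic metric space, ξ ∈ ∂_∞X, and x, y two points on a horosphere H centered at ξ. Let z be the closest point to ξ on [x,y] (the point minimizing the Busemann function β_ξ(·,x₀) on [x,y]). Then |d(x,z) - d(y,z)| ≤ 2 log(1+√2). -/
noncomputable section

open Filter

variable {X : Type*} [MetricSpace X]

namespace Stmt10Aux

open UpperHalfPlane

def V (u : ℝ) : ℍ := ⟨⟨0, Real.exp u⟩, by simpa using Real.exp_pos u⟩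

@[simp] lemma V_re (u : ℝ) : (V u).re = 0 := rfl
@[simp] lemma V_im (u : ℝ) : (V u).im = Real.exp u := rfl

lemma cosh_dist_V (p : ℍ) (u : ℝ) :
    Real.cosh (dist p (V u)) =
      (p.re ^ 2 + p.im ^ 2 + Real.exp u ^ 2) / (2 * p.im * Real.exp u) := by
  rw [UpperHalfPlane.cosh_dist']
  simp [sub_sq]

lemma dist_eq_of_cosh_eq {d e : ℝ} (hd : 0 ≤ d) (he : 0 ≤ e)
    (h : Real.cosh d = Real.cosh e) : d = e :=
  Real.cosh_strictMonoOn.injOn (Set.mem_Ici.2 hd) (Set.mem_Ici.2 he) h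

lemma dist_V_V (s t : ℝ) : dist (V s) (V t) = |s - t| := by
  refine dist_eq_of_cosh_eq dist_nonneg (abs_nonneg _) ?_
  rw [cosh_dist_V, Real.cosh_abs, Real.cosh_eq, Real.exp_neg, Real.exp_sub]
  simp only [V_re, V_im]
  have hs := Real.exp_pos s
  have ht := Real.exp_pos t
  field_simp
  ring

lemma isGeodSeg_V (L : ℝ) (hL : 0 ≤ L) : IsGeodSeg (fun u => V u) (V 0) (V L) := by
  have hd : dist (V 0) (V L) = L := by rw [dist_V_V, zero_sub, abs_neg, abs_of_nonneg hL]
  exact ⟨rfl, by rw [hd], fun s _ t _ => dist_V_V s t⟩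

lemma median (p : ℍ) (L : ℝ) :
    Real.cosh (dist p (V 0)) + Real.cosh (dist p (V L)) =
      2 * Real.cosh (L / 2) * Real.cosh (dist p (V (L / 2))) := by
  have hM : Real.exp L = Real.exp (L / 2) ^ 2 := by
    rw [sq, ← Real.exp_add]; norm_num
  rw [cosh_dist_V, cosh_dist_V, cosh_dist_V, Real.cosh_eq, Real.exp_zero, Real.exp_neg, hM]
  have h1 : (0:ℝ) < Real.exp (L / 2) := Real.exp_pos _
  have h2 : (0:ℝ) < p.im := p.im_pos
  field_simp
  ring

set_option maxHeartbeats 2000000 in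
lemma exists_apex (L d1 d2 : ℝ) (hL : 0 < L) (h1 : 0 ≤ d1) (h2 : 0 ≤ d2)
    (t1 : d1 ≤ d2 + L) (t2 : d2 ≤ d1 + L) (t3 : L ≤ d1 + d2) :
    ∃ p : ℍ, dist p (V 0) = d1 ∧ dist p (V L) = d2 := by
  set u : ℝ := Real.exp d1 with hu
  set v : ℝ := Real.exp d2 with hv
  set E : ℝ := Real.exp L with hE
  have hu1 : 1 ≤ u := Real.one_le_exp h1
  have hv1 : 1 ≤ v := Real.one_le_exp h2
  have hE1 : 1 < E := Real.one_lt_exp_iff.2 hL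
  have hup : (0:ℝ) < u := by linarith
  have hvp : (0:ℝ) < v := by linarith
  have hEp : (0:ℝ) < E := by linarith
  have hA : u ≤ v * E := by
    rw [hu, hv, hE, ← Real.exp_add]; exact Real.exp_le_exp.2 t1
  have hB : v ≤ u * E := by
    rw [hu, hv, hE, ← Real.exp_add]; exact Real.exp_le_exp.2 t2
  have hC : E ≤ u * v := by
    rw [hu, hv, hE, ← Real.exp_add]; exact Real.exp_le_exp.2 t3
  have hc1 : Real.cosh d1 = (u ^ 2 + 1) / (2 * u) := by
    rw [Real.cosh_eq, Real.exp_neg, ← hu]; field_simp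
  have hc2 : Real.cosh d2 = (v ^ 2 + 1) / (2 * v) := by
    rw [Real.cosh_eq, Real.exp_neg, ← hv]; field_simp
  set D2 : ℝ := u * E * (v ^ 2 + 1) - v * (u ^ 2 + 1) with hD2
  have hD2pos : 0 < D2 := by
    have k1 : 0 ≤ (u * v - 1) * (E * v - u) := by
      apply mul_nonneg <;> nlinarith
    have k2 : 0 < (E - 1) * (u + v) := by
      apply mul_pos <;> linarith
    rw [hD2]; nlinarith
  set β : ℝ := u * v * (E ^ 2 - 1) / D2 with hβ
  have hβpos : 0 < β := by
    apply div_pos _ hD2pos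
    have : 1 < E ^ 2 := by nlinarith
    nlinarith
  have hA2 : 2 * β * Real.cosh d1 - β ^ 2 - 1 =
      (u * v - E) * (u * v * E - 1) * (u * E - v) * (v * E - u) / D2 ^ 2 := by
    rw [hc1, hβ, hD2]
    have hD2ne : D2 ≠ 0 := ne_of_gt hD2pos
    rw [hD2] at hD2ne
    field_simp
    ring
  have hA2nn : 0 ≤ 2 * β * Real.cosh d1 - β ^ 2 - 1 := by
    rw [hA2]
    apply div_nonneg _ (sq_nonneg _)
    have f1 : 0 ≤ u * v - E := by linarith
    have f2 : 0 ≤ u * v * E - 1 := by nlinarith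
    have f3 : 0 ≤ u * E - v := by linarith
    have f4 : 0 ≤ v * E - u := by linarith
    positivity
  set a : ℝ := Real.sqrt (2 * β * Real.cosh d1 - β ^ 2 - 1) with ha
  have ha2 : a ^ 2 = 2 * β * Real.cosh d1 - β ^ 2 - 1 := Real.sq_sqrt hA2nn
  have hD2ne : u * E * (v ^ 2 + 1) - v * (u ^ 2 + 1) ≠ 0 := by
    rw [← hD2]; exact ne_of_gt hD2pos
  have hkey : E ^ 2 - 1 = 2 * β * (E * Real.cosh d2 - Real.cosh d1) := by
    rw [hc1, hc2, hβ]
    have hD2ne' : D2 ≠ 0 := ne_of_gt hD2pos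
    field_simp
    rw [hD2]
    ring
  refine ⟨⟨⟨a, β⟩, hβpos⟩, ?_, ?_⟩
  · apply dist_eq_of_cosh_eq dist_nonneg h1
    rw [cosh_dist_V, Real.exp_zero]
    show (a ^ 2 + β ^ 2 + 1 ^ 2) / (2 * β * 1) = Real.cosh d1
    rw [div_eq_iff (by positivity), ha2]
    ring
  · apply dist_eq_of_cosh_eq dist_nonneg h2
    rw [cosh_dist_V]
    show (a ^ 2 + β ^ 2 + E ^ 2) / (2 * β * E) = Real.cosh d2
    rw [div_eq_iff (by positivity), ha2]
    linear_combination hkey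

end Stmt10Aux

/-- let ξ ∈ ∂_∞X be the point at infinity of the geodesic ray `r`, with
Busemann function `b` (so x,y lie on a common horosphere centered at ξ iff b x = b y).
If `z` is the point of the segment `[x,y]` closest to ξ (minimizing `b` on `[x,y]`),
then |d(x,z) - d(y,z)| ≤ 2 log(1+√2) = 2 c₁. -/
theorem stmt10 (hX : CATm1 X) (r : ℝ → X) (hr : IsGeodRay r)
    (b : X → ℝ)
    (hb : ∀ p : X, Tendsto (fun t : ℝ => dist p (r t) - t) atTop (nhds (b p)))
    (x y : X) (hxy : b x = b y)
    (γ : ℝ → X) (hγ : IsGeodSeg γ x y)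
    (t₀ : ℝ) (ht₀ : t₀ ∈ Set.Icc (0 : ℝ) (dist x y)) (z : X) (hz : z = γ t₀)
    (hmin : ∀ s ∈ Set.Icc (0 : ℝ) (dist x y), b z ≤ b (γ s)) :
    |dist x z - dist y z| ≤ 2 * c₁ := by
  clear hr
  have hc₁ : c₁ = Real.log (1 + Real.sqrt 2) := rfl
  have hsqrt2 : (1:ℝ) ≤ Real.sqrt 2 := by
    nlinarith [Real.sq_sqrt (show (0:ℝ) ≤ 2 by norm_num), Real.sqrt_nonneg 2]
  have hc1' : Real.log 2 ≤ c₁ := by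
    rw [hc₁]
    exact Real.log_le_log (by norm_num) (by linarith)
  rcases eq_or_lt_of_le (dist_nonneg : (0:ℝ) ≤ dist x y) with hL0 | hLpos
  · -- degenerate case x = y
    have ht0 : t₀ = 0 := le_antisymm (by rw [← hL0] at ht₀; exact ht₀.2) ht₀.1
    have hxz : dist x z = 0 := by rw [hz, ht0, hγ.1, dist_self]
    have hyz : dist y z = 0 := by
      rw [hz, ht0, hγ.1, dist_comm]
      exact hL0.symm
    rw [hxz, hyz]
    have h0 : (0:ℝ) ≤ c₁ := by
      rw [hc₁]; exact Real.log_nonneg (by linarith)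
    simp only [sub_zero, abs_zero]
    linarith
  · set L := dist x y with hL
    have hC : (0:ℝ) < Real.cosh (L/2) := Real.cosh_pos _
    have hmem : L/2 ∈ Set.Icc (0:ℝ) L := ⟨by linarith, by linarith⟩
    -- Step A: comparison bound, for every t
    have key : ∀ t : ℝ, dist (γ (L/2)) (r t) - t ≤
        Real.log ((Real.exp (dist x (r t) - t) + Real.exp (dist y (r t) - t) +
          2 * Real.exp (-t)) / (2 * Real.cosh (L/2))) := by
      intro t
      set p := r t with hp
      obtain ⟨p', hp1, hp2⟩ := Stmt10Aux.exists_apex L (dist p x) (dist p y) hLpos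
        dist_nonneg dist_nonneg
        (by have h := dist_triangle p y x; rw [dist_comm y x] at h; linarith)
        (by have h := dist_triangle p x y; linarith)
        (by have h := dist_triangle x p y; rw [dist_comm x p] at h; linarith)
      have hcomp := hX.2 p x y γ hγ p' (Stmt10Aux.V 0) (Stmt10Aux.V L)
        (fun u => Stmt10Aux.V u) (Stmt10Aux.isGeodSeg_V L hLpos.le) hp1.symm hp2.symm
        (by rw [Stmt10Aux.dist_V_V, zero_sub, abs_neg, abs_of_nonneg hLpos.le])
        (L/2) hmem
      have hmed := Stmt10Aux.median p' L
      rw [hp1, hp2] at hmed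
      have hch : Real.cosh (dist p (γ (L/2))) ≤
          Real.cosh (dist p' (Stmt10Aux.V (L/2))) := by
        rw [Real.cosh_le_cosh, abs_of_nonneg dist_nonneg, abs_of_nonneg dist_nonneg]
        exact hcomp
      have e1 : Real.exp (dist p (γ (L/2))) ≤ 2 * Real.cosh (dist p (γ (L/2))) := by
        rw [Real.cosh_eq]
        have h := (Real.exp_pos (-(dist p (γ (L/2))))).le
        linarith
      have e2 : 2 * Real.cosh (dist p x) ≤ Real.exp (dist p x) + 1 := by
        rw [Real.cosh_eq]
        have h : Real.exp (-(dist p x)) ≤ 1 := Real.exp_le_one_iff.2 (neg_nonpos.2 dist_nonneg)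
        linarith
      have e3 : 2 * Real.cosh (dist p y) ≤ Real.exp (dist p y) + 1 := by
        rw [Real.cosh_eq]
        have h : Real.exp (-(dist p y)) ≤ 1 := Real.exp_le_one_iff.2 (neg_nonpos.2 dist_nonneg)
        linarith
      have m1 := mul_le_mul_of_nonneg_left e1 hC.le
      have m2 := mul_le_mul_of_nonneg_left hch hC.le
      have hexp : Real.exp (dist p (γ (L/2))) * (2 * Real.cosh (L/2)) ≤
          Real.exp (dist p x) + Real.exp (dist p y) + 2 := by nlinarith [hmed, e2, e3, m1, m2]
      have hstep : dist p (γ (L/2)) ≤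
          Real.log ((Real.exp (dist p x) + Real.exp (dist p y) + 2) / (2 * Real.cosh (L/2))) := by
        rw [Real.le_log_iff_exp_le (by positivity), le_div_iff₀ (by positivity)]
        exact hexp
      have hGeq : (Real.exp (dist x p - t) + Real.exp (dist y p - t) + 2 * Real.exp (-t)) /
            (2 * Real.cosh (L/2)) =
          (Real.exp (dist p x) + Real.exp (dist p y) + 2) / (2 * Real.cosh (L/2)) *
            Real.exp (-t) := by
        rw [sub_eq_add_neg, sub_eq_add_neg, Real.exp_add, Real.exp_add,
          dist_comm x p, dist_comm y p]
        ring
      rw [dist_comm (γ (L/2)) p, hGeq, Real.log_mul (by positivity) (Real.exp_ne_zero _),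
        Real.log_exp]
      linarith
    -- Step B: pass to the limit
    have hlim1 : Tendsto (fun t : ℝ => Real.exp (dist x (r t) - t)) atTop
        (nhds (Real.exp (b x))) := (Real.continuous_exp.tendsto _).comp (hb x)
    have hlim2 : Tendsto (fun t : ℝ => Real.exp (dist y (r t) - t)) atTop
        (nhds (Real.exp (b y))) := (Real.continuous_exp.tendsto _).comp (hb y)
    have hlim3 : Tendsto (fun t : ℝ => 2 * Real.exp (-t)) atTop (nhds (2 * 0)) :=
      Real.tendsto_exp_neg_atTop_nhds_zero.const_mul 2
    have hGlim : Tendsto (fun t : ℝ => (Real.exp (dist x (r t) - t) +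
        Real.exp (dist y (r t) - t) + 2 * Real.exp (-t)) / (2 * Real.cosh (L/2))) atTop
        (nhds ((Real.exp (b x) + Real.exp (b y) + 2 * 0) / (2 * Real.cosh (L/2)))) :=
      ((hlim1.add hlim2).add hlim3).div_const _
    have hvpos : 0 < (Real.exp (b x) + Real.exp (b y) + 2 * 0) / (2 * Real.cosh (L/2)) := by
      positivity
    have hloglim : Tendsto (fun t : ℝ => Real.log ((Real.exp (dist x (r t) - t) +
        Real.exp (dist y (r t) - t) + 2 * Real.exp (-t)) / (2 * Real.cosh (L/2)))) atTop
        (nhds (Real.log ((Real.exp (b x) + Real.exp (b y) + 2 * 0) /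
          (2 * Real.cosh (L/2))))) :=
      (Real.continuousAt_log (ne_of_gt hvpos)).tendsto.comp hGlim
    have hbm : b (γ (L/2)) ≤ Real.log ((Real.exp (b x) + Real.exp (b y) + 2 * 0) /
        (2 * Real.cosh (L/2))) :=
      le_of_tendsto_of_tendsto' (hb (γ (L/2))) hloglim key
    have hval : Real.log ((Real.exp (b x) + Real.exp (b y) + 2 * 0) /
        (2 * Real.cosh (L/2))) = b x - Real.log (Real.cosh (L/2)) := by
      rw [← hxy]
      have heq : (Real.exp (b x) + Real.exp (b x) + 2 * 0) / (2 * Real.cosh (L/2)) =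
          Real.exp (b x) / Real.cosh (L/2) := by
        field_simp
        ring
      rw [heq, Real.log_div (Real.exp_ne_zero _) (ne_of_gt hC), Real.log_exp]
    rw [hval] at hbm
    -- Step C: Lipschitz property of b and conclusion
    have lip : ∀ p q : X, b p ≤ dist p q + b q := by
      intro p q
      refine le_of_tendsto_of_tendsto' (hb p) ((hb q).const_add (dist p q)) ?_
      intro t
      have h := dist_triangle p q (r t)
      linarith
    have hxz : dist x z = t₀ := by
      rw [hz]
      conv_lhs => rw [← hγ.1]
      rw [hγ.2.2 0 ⟨le_rfl, dist_nonneg⟩ t₀ ht₀, zero_sub, abs_neg, abs_of_nonneg ht₀.1]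
    have hyz : dist y z = L - t₀ := by
      rw [hz]
      conv_lhs => rw [← hγ.2.1]
      rw [hγ.2.2 L ⟨dist_nonneg, le_rfl⟩ t₀ ht₀, abs_of_nonneg (by linarith [ht₀.2])]
    have hzb : b z ≤ b (γ (L/2)) := hmin (L/2) hmem
    have k1 : b x ≤ t₀ + b z := by have h := lip x z; rwa [hxz] at h
    have k2 : b y ≤ (L - t₀) + b z := by have h := lip y z; rwa [hyz] at h
    have hclow : L/2 - Real.log 2 ≤ Real.log (Real.cosh (L/2)) := by
      have h' : Real.exp (L/2) / 2 ≤ Real.cosh (L/2) := by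
        rw [Real.cosh_eq]
        have h := (Real.exp_pos (-(L/2))).le
        linarith
      calc L/2 - Real.log 2 = Real.log (Real.exp (L/2) / 2) := by
            rw [Real.log_div (Real.exp_ne_zero _) two_ne_zero, Real.log_exp]
        _ ≤ _ := Real.log_le_log (by positivity) h'
    have low1 : Real.log (Real.cosh (L/2)) ≤ t₀ := by linarith
    have low2 : Real.log (Real.cosh (L/2)) ≤ L - t₀ := by linarith
    rw [hxz, hyz, abs_le]
    constructor
    · linarith
    · linarith
end
end
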